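/- arXiv:1009.2471 — 5 statements merged into one kernel-verified Lean document; each statement's English description precedes it below -/
import Mathlib

section
/- Fix a, b > 0 with |a-b| < 1 < a+b, and let γ = (a² + b² − 1)/(2ab), θ₀ = arccos(γ). Define the distribution K on ℝ² × ℝ² as the pushforward of normalized arclength dθ on [0, 2π) under θ ↦ ((a cos θ, a sin θ), (b cos(θ + θ₀), b sin(θ + θ₀))). Then the Fourier transform of K satisfies K̂(ξ, η) = σ̂(U(ξ, η)), where σ is arclength measure on the unit circle in ℝ² and U : ℝ⁴ → ℝ² is the linear map U(ξ, η) = (a ξ₁ + b γ η₁ + b √(1−γ²) η₂, a ξ₂ − b √(1−γ²) η₁ + b γ η₂). -/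
open MeasureTheory Real Complex

theorem stmt_5 (a b : ℝ) (ha : 0 < a) (hb : 0 < b) (h1 : |a - b| < 1) (h2 : 1 < a + b)
    (γ θ₀ : ℝ) (hγ : γ = (a ^ 2 + b ^ 2 - 1) / (2 * a * b)) (hθ₀ : θ₀ = Real.arccos γ)
    (ξ η : ℝ × ℝ)
    (U : ℝ × ℝ)
    (hU : U = (a * ξ.1 + b * γ * η.1 + b * Real.sqrt (1 - γ ^ 2) * η.2,
               a * ξ.2 - b * Real.sqrt (1 - γ ^ 2) * η.1 + b * γ * η.2)) :
    (∫ θ in Set.Ico (0 : ℝ) (2 * π),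
        Complex.exp (-2 * π * Complex.I *
          (a * Real.cos θ * ξ.1 + a * Real.sin θ * ξ.2 +
            b * Real.cos (θ + θ₀) * η.1 + b * Real.sin (θ + θ₀) * η.2)))
      = ∫ θ in Set.Ico (0 : ℝ) (2 * π),
          Complex.exp (-2 * π * Complex.I * (Real.cos θ * U.1 + Real.sin θ * U.2)) := by
  have hab : (0:ℝ) < 2 * a * b := by positivity
  have hγ1 : -1 ≤ γ := by
    rw [hγ, le_div_iff₀ hab]
    nlinarith
  have hγ2 : γ ≤ 1 := by
    rw [hγ, div_le_iff₀ hab]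
    nlinarith [_root_.sq_abs (a - b), abs_nonneg (a - b)]
  have hc : Real.cos θ₀ = γ := by rw [hθ₀, Real.cos_arccos hγ1 hγ2]
  have hs : Real.sin θ₀ = Real.sqrt (1 - γ ^ 2) := by
    rw [hθ₀, Real.sin_arccos]
  refine setIntegral_congr_fun measurableSet_Ico (fun θ _ => ?_)
  congr 1
  have key : a * Real.cos θ * ξ.1 + a * Real.sin θ * ξ.2 +
      b * Real.cos (θ + θ₀) * η.1 + b * Real.sin (θ + θ₀) * η.2
      = Real.cos θ * U.1 + Real.sin θ * U.2 := by
    rw [hU, Real.cos_add, Real.sin_add, hc, hs]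
    ring
  congr 1
  exact_mod_cast key
end

section
/- Let F, G : ℝ² → [0, ∞) be measurable and let M(ξ, η) ≥ 0 satisfy M(ξ, η) ≤ A (1 + |ξ| + |η|)^{-1/2}, and let w(ξ, η) ≥ 0 with sup_ξ ∫ w(ξ, η) dη ≤ B and sup_η ∫ w(ξ, η) dξ ≤ B, and suppose moreover that w is supported where |ξ + η| ≤ 1 (so that (1+|ξ|) ≈ (1+|η|) on the support). Then for any β₁, β₂ ≥ 0 with β₁ + β₂ = 1/2, ∬ F(ξ) G(η) M(ξ, η) w(ξ, η) dξ dη ≤ C (∫ F(ξ)² (1+|ξ|)^{-2β₁} dξ)^{1/2} (∫ G(η)² (1+|η|)^{-2β₂} dη)^{1/2}, with C depending only on A, B. -/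
open MeasureTheory Real

noncomputable abbrev Plane := EuclideanSpace ℝ (Fin 2)

theorem stmt_7 (A B : ℝ) (hA : 0 < A) (hB : 0 < B) :
    ∃ C : ℝ, 0 < C ∧
      ∀ (F G : Plane → ℝ) (M w : Plane → Plane → ℝ) (β₁ β₂ : ℝ),
        Measurable F → Measurable G →
        Measurable (Function.uncurry M) → Measurable (Function.uncurry w) →
        (∀ x, 0 ≤ F x) → (∀ x, 0 ≤ G x) →
        (∀ ξ η, 0 ≤ M ξ η) → (∀ ξ η, 0 ≤ w ξ η) →
        (∀ ξ η, M ξ η ≤ A * (1 + ‖ξ‖ + ‖η‖) ^ (-(1 / 2 : ℝ))) →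
        (∀ ξ, ∫⁻ η, ENNReal.ofReal (w ξ η) ≤ ENNReal.ofReal B) →
        (∀ η, ∫⁻ ξ, ENNReal.ofReal (w ξ η) ≤ ENNReal.ofReal B) →
        (∀ ξ η, w ξ η ≠ 0 → ‖ξ + η‖ ≤ 1) →
        0 ≤ β₁ → 0 ≤ β₂ → β₁ + β₂ = 1 / 2 →
        (∫⁻ ξ, ∫⁻ η, ENNReal.ofReal (F ξ * G η * M ξ η * w ξ η))
          ≤ ENNReal.ofReal C *
            (∫⁻ ξ, ENNReal.ofReal (F ξ ^ 2 * (1 + ‖ξ‖) ^ (-(2 * β₁)))) ^ (1 / 2 : ℝ) *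
            (∫⁻ η, ENNReal.ofReal (G η ^ 2 * (1 + ‖η‖) ^ (-(2 * β₂)))) ^ (1 / 2 : ℝ) := by
  refine ⟨A * B, mul_pos hA hB, ?_⟩
  intro F G M w β₁ β₂ hF hG hM hw hF0 hG0 hM0 hw0 hMle hwB1 hwB2 _hsupp hβ₁ hβ₂ hβ
  set u : Plane → ENNReal := fun ξ => ENNReal.ofReal (F ξ * (1 + ‖ξ‖) ^ (-β₁)) with hu
  set v : Plane → ENNReal := fun η => ENNReal.ofReal (G η * (1 + ‖η‖) ^ (-β₂)) with hv
  set W : Plane × Plane → ENNReal := fun p => ENNReal.ofReal (w p.1 p.2) with hW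
  have hpos : ∀ ξ : Plane, (0:ℝ) < 1 + ‖ξ‖ := fun ξ => by positivity
  -- pointwise bound on M
  have hMle' : ∀ ξ η : Plane, M ξ η ≤ A * ((1 + ‖ξ‖) ^ (-β₁) * (1 + ‖η‖) ^ (-β₂)) := by
    intro ξ η
    refine (hMle ξ η).trans ?_
    have h1 : (0:ℝ) < 1 + ‖ξ‖ + ‖η‖ := by positivity
    rw [show (-(1/2 : ℝ)) = -β₁ + -β₂ by linarith, Real.rpow_add h1]
    have h1' : (1 + ‖ξ‖ + ‖η‖) ^ (-β₁) ≤ (1 + ‖ξ‖) ^ (-β₁) :=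
      Real.rpow_le_rpow_of_nonpos (hpos ξ) (by linarith [norm_nonneg η]) (neg_nonpos.mpr hβ₁)
    have h2' : (1 + ‖ξ‖ + ‖η‖) ^ (-β₂) ≤ (1 + ‖η‖) ^ (-β₂) :=
      Real.rpow_le_rpow_of_nonpos (hpos η) (by linarith [norm_nonneg ξ]) (neg_nonpos.mpr hβ₂)
    exact mul_le_mul_of_nonneg_left
      (mul_le_mul h1' h2' (Real.rpow_nonneg h1.le _) (Real.rpow_nonneg (hpos ξ).le _)) hA.le
  -- measurability helpers
  have hnorm1 : ∀ b : ℝ, Measurable fun ξ : Plane => ((1 + ‖ξ‖ : ℝ)) ^ b := by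
    intro b
    exact ((continuous_const.add continuous_norm).rpow_const
      (fun x => Or.inl (ne_of_gt (hpos x)))).measurable
  have hu_m : Measurable u := (hF.mul (hnorm1 _)).ennreal_ofReal
  have hv_m : Measurable v := (hG.mul (hnorm1 _)).ennreal_ofReal
  have hW_m : Measurable W := hw.ennreal_ofReal
  have hWh_m : Measurable fun p : Plane × Plane => (W p) ^ (1/2 : ℝ) :=
    ENNReal.continuous_rpow_const.measurable.comp hW_m
  have hh1_m : Measurable fun p : Plane × Plane => u p.1 * (W p) ^ (1/2 : ℝ) :=
    (hu_m.comp measurable_fst).mul hWh_m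
  have hh2_m : Measurable fun p : Plane × Plane => v p.2 * (W p) ^ (1/2 : ℝ) :=
    (hv_m.comp measurable_snd).mul hWh_m
  -- pointwise bound
  have key : ∀ p : Plane × Plane, ENNReal.ofReal (F p.1 * G p.2 * M p.1 p.2 * w p.1 p.2) ≤
      ENNReal.ofReal A * ((u p.1 * (W p) ^ (1/2:ℝ)) * (v p.2 * (W p) ^ (1/2:ℝ))) := by
    rintro ⟨ξ, η⟩
    have hWsq : (W (ξ,η)) ^ (1/2:ℝ) * (W (ξ,η)) ^ (1/2:ℝ) = W (ξ,η) := by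
      rw [← ENNReal.rpow_add_of_nonneg _ _ (by norm_num) (by norm_num)]
      norm_num
    have hmm : (u ξ * (W (ξ,η)) ^ (1/2:ℝ)) * (v η * (W (ξ,η)) ^ (1/2:ℝ))
        = u ξ * v η * W (ξ,η) := by
      rw [mul_mul_mul_comm, hWsq]
    rw [hmm]
    have hreal : F ξ * G η * M ξ η * w ξ η ≤
        A * ((F ξ * (1 + ‖ξ‖) ^ (-β₁)) * (G η * (1 + ‖η‖) ^ (-β₂)) * w ξ η) := by
      calc F ξ * G η * M ξ η * w ξ η
          ≤ F ξ * G η * (A * ((1 + ‖ξ‖) ^ (-β₁) * (1 + ‖η‖) ^ (-β₂))) * w ξ η := by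
            have := hMle' ξ η
            gcongr
            · exact hw0 ξ η
            · exact mul_nonneg (hF0 ξ) (hG0 η)
        _ = A * ((F ξ * (1 + ‖ξ‖) ^ (-β₁)) * (G η * (1 + ‖η‖) ^ (-β₂)) * w ξ η) := by ring
    calc ENNReal.ofReal (F ξ * G η * M ξ η * w ξ η)
        ≤ ENNReal.ofReal (A * ((F ξ * (1 + ‖ξ‖) ^ (-β₁)) * (G η * (1 + ‖η‖) ^ (-β₂)) * w ξ η)) :=
          ENNReal.ofReal_le_ofReal hreal
      _ = ENNReal.ofReal A * (u ξ * v η * W (ξ,η)) := by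
          rw [ENNReal.ofReal_mul hA.le, ENNReal.ofReal_mul
            (mul_nonneg (mul_nonneg (hF0 ξ) (Real.rpow_nonneg (hpos ξ).le _))
              (mul_nonneg (hG0 η) (Real.rpow_nonneg (hpos η).le _))),
            ENNReal.ofReal_mul (mul_nonneg (hF0 ξ) (Real.rpow_nonneg (hpos ξ).le _))]
  -- rewrite double integral as product integral
  have hint_m : Measurable fun p : Plane × Plane =>
      ENNReal.ofReal (F p.1 * G p.2 * M p.1 p.2 * w p.1 p.2) := by
    apply Measurable.ennreal_ofReal
    exact (((hF.comp measurable_fst).mul (hG.comp measurable_snd)).mul hM).mul hw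
  have step1 : (∫⁻ ξ, ∫⁻ η, ENNReal.ofReal (F ξ * G η * M ξ η * w ξ η))
      = ∫⁻ p : Plane × Plane, ENNReal.ofReal (F p.1 * G p.2 * M p.1 p.2 * w p.1 p.2)
        ∂(volume.prod volume) := (lintegral_prod _ hint_m.aemeasurable).symm
  rw [step1]
  set X := ∫⁻ ξ, ENNReal.ofReal (F ξ ^ 2 * (1 + ‖ξ‖) ^ (-(2 * β₁))) with hX
  set Y := ∫⁻ η, ENNReal.ofReal (G η ^ 2 * (1 + ‖η‖) ^ (-(2 * β₂))) with hY
  have step2 : (∫⁻ p : Plane × Plane, ENNReal.ofReal (F p.1 * G p.2 * M p.1 p.2 * w p.1 p.2)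
        ∂(volume.prod volume))
      ≤ ENNReal.ofReal A * ∫⁻ p : Plane × Plane,
          (u p.1 * (W p) ^ (1/2:ℝ)) * (v p.2 * (W p) ^ (1/2:ℝ)) ∂(volume.prod volume) := by
    rw [← lintegral_const_mul _ (f := fun p : Plane × Plane =>
      (u p.1 * (W p) ^ (1/2:ℝ)) * (v p.2 * (W p) ^ (1/2:ℝ))) (hh1_m.mul hh2_m)]
    exact lintegral_mono key
  -- Cauchy-Schwarz via Hölder
  have hconj : Real.HolderConjugate 2 2 := by constructor <;> norm_num
  have cs := ENNReal.lintegral_mul_le_Lp_mul_Lq (volume.prod volume) hconj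
    hh1_m.aemeasurable hh2_m.aemeasurable
  -- squares of the two factors
  have husq : ∀ ξ : Plane, u ξ ^ (2:ℝ) = ENNReal.ofReal (F ξ ^ 2 * (1 + ‖ξ‖) ^ (-(2 * β₁))) := by
    intro ξ
    show ENNReal.ofReal (F ξ * (1 + ‖ξ‖) ^ (-β₁)) ^ (2:ℝ) = _
    rw [ENNReal.ofReal_rpow_of_nonneg
      (mul_nonneg (hF0 ξ) (Real.rpow_nonneg (hpos ξ).le _)) (by norm_num)]
    congr 1
    have hf2 : (F ξ) ^ (2:ℝ) = F ξ ^ 2 := by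
      rw [show (2:ℝ) = ((2:ℕ):ℝ) by norm_num, Real.rpow_natCast]
    rw [Real.mul_rpow (hF0 ξ) (Real.rpow_nonneg (hpos ξ).le _),
      ← Real.rpow_mul (hpos ξ).le, hf2, show -β₁ * 2 = -(2*β₁) by ring]
  have hvsq : ∀ η : Plane, v η ^ (2:ℝ) = ENNReal.ofReal (G η ^ 2 * (1 + ‖η‖) ^ (-(2 * β₂))) := by
    intro η
    show ENNReal.ofReal (G η * (1 + ‖η‖) ^ (-β₂)) ^ (2:ℝ) = _
    rw [ENNReal.ofReal_rpow_of_nonneg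
      (mul_nonneg (hG0 η) (Real.rpow_nonneg (hpos η).le _)) (by norm_num)]
    congr 1
    have hg2 : (G η) ^ (2:ℝ) = G η ^ 2 := by
      rw [show (2:ℝ) = ((2:ℕ):ℝ) by norm_num, Real.rpow_natCast]
    rw [Real.mul_rpow (hG0 η) (Real.rpow_nonneg (hpos η).le _),
      ← Real.rpow_mul (hpos η).le, hg2, show -β₂ * 2 = -(2*β₂) by ring]
  have hWhalf_sq : ∀ p : Plane × Plane, ((W p) ^ (1/2:ℝ)) ^ (2:ℝ) = W p := by
    intro p
    rw [← ENNReal.rpow_mul]; norm_num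
  -- first square integral
  have hS1 : (∫⁻ p : Plane × Plane, (u p.1 * (W p) ^ (1/2:ℝ)) ^ (2:ℝ) ∂(volume.prod volume))
      ≤ ENNReal.ofReal B * X := by
    have e1 : ∀ p : Plane × Plane, (u p.1 * (W p) ^ (1/2:ℝ)) ^ (2:ℝ) = u p.1 ^ (2:ℝ) * W p := by
      intro p
      rw [ENNReal.mul_rpow_of_nonneg _ _ (by norm_num : (0:ℝ) ≤ 2), hWhalf_sq]
    calc (∫⁻ p : Plane × Plane, (u p.1 * (W p) ^ (1/2:ℝ)) ^ (2:ℝ) ∂(volume.prod volume))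
        = ∫⁻ p : Plane × Plane, u p.1 ^ (2:ℝ) * W p ∂(volume.prod volume) := by
          simp_rw [e1]
      _ = ∫⁻ ξ, ∫⁻ η, u ξ ^ (2:ℝ) * W (ξ, η) := by
          exact lintegral_prod _ (((hu_m.comp measurable_fst).pow_const _).mul hW_m).aemeasurable
      _ = ∫⁻ ξ, u ξ ^ (2:ℝ) * ∫⁻ η, W (ξ, η) := by
          refine lintegral_congr fun ξ => ?_
          exact lintegral_const_mul _ (by exact hw.of_uncurry_left.ennreal_ofReal)
      _ ≤ ∫⁻ ξ, u ξ ^ (2:ℝ) * ENNReal.ofReal B := by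
          refine lintegral_mono fun ξ => ?_
          exact mul_le_mul_right (hwB1 ξ) _
      _ = ENNReal.ofReal B * X := by
          rw [lintegral_mul_const _ (hu_m.pow_const _), mul_comm, hX]
          congr 1
          exact lintegral_congr husq
  -- second square integral
  have hS2 : (∫⁻ p : Plane × Plane, (v p.2 * (W p) ^ (1/2:ℝ)) ^ (2:ℝ) ∂(volume.prod volume))
      ≤ ENNReal.ofReal B * Y := by
    have e2 : ∀ p : Plane × Plane, (v p.2 * (W p) ^ (1/2:ℝ)) ^ (2:ℝ) = v p.2 ^ (2:ℝ) * W p := by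
      intro p
      rw [ENNReal.mul_rpow_of_nonneg _ _ (by norm_num : (0:ℝ) ≤ 2), hWhalf_sq]
    calc (∫⁻ p : Plane × Plane, (v p.2 * (W p) ^ (1/2:ℝ)) ^ (2:ℝ) ∂(volume.prod volume))
        = ∫⁻ p : Plane × Plane, v p.2 ^ (2:ℝ) * W p ∂(volume.prod volume) := by
          simp_rw [e2]
      _ = ∫⁻ ξ, ∫⁻ η, v η ^ (2:ℝ) * W (ξ, η) := by
          exact lintegral_prod _ (((hv_m.comp measurable_snd).pow_const _).mul hW_m).aemeasurable
      _ = ∫⁻ η, ∫⁻ ξ, v η ^ (2:ℝ) * W (ξ, η) := by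
          apply lintegral_lintegral_swap
          exact (((hv_m.comp measurable_snd).pow_const _).mul hW_m).aemeasurable
      _ = ∫⁻ η, v η ^ (2:ℝ) * ∫⁻ ξ, W (ξ, η) := by
          refine lintegral_congr fun η => ?_
          exact lintegral_const_mul _ (by exact hw.of_uncurry_right.ennreal_ofReal)
      _ ≤ ∫⁻ η, v η ^ (2:ℝ) * ENNReal.ofReal B := by
          refine lintegral_mono fun η => ?_
          exact mul_le_mul_right (hwB2 η) _
      _ = ENNReal.ofReal B * Y := by
          rw [lintegral_mul_const _ (hv_m.pow_const _), mul_comm, hY]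
          congr 1
          exact lintegral_congr hvsq
  -- combine
  have hBhalf : (ENNReal.ofReal B) ^ (1/2:ℝ) * (ENNReal.ofReal B) ^ (1/2:ℝ)
      = ENNReal.ofReal B := by
    rw [← ENNReal.rpow_add_of_nonneg _ _ (by norm_num) (by norm_num)]
    norm_num
  calc (∫⁻ p : Plane × Plane, ENNReal.ofReal (F p.1 * G p.2 * M p.1 p.2 * w p.1 p.2)
        ∂(volume.prod volume))
      ≤ ENNReal.ofReal A * ∫⁻ p : Plane × Plane,
          (u p.1 * (W p) ^ (1/2:ℝ)) * (v p.2 * (W p) ^ (1/2:ℝ)) ∂(volume.prod volume) := step2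
    _ ≤ ENNReal.ofReal A *
        ((∫⁻ p : Plane × Plane, (u p.1 * (W p) ^ (1/2:ℝ)) ^ (2:ℝ) ∂(volume.prod volume)) ^ (1/2:ℝ) *
         (∫⁻ p : Plane × Plane, (v p.2 * (W p) ^ (1/2:ℝ)) ^ (2:ℝ) ∂(volume.prod volume)) ^ (1/2:ℝ)) :=
        mul_le_mul_right cs _
    _ ≤ ENNReal.ofReal A *
        ((ENNReal.ofReal B * X) ^ (1/2:ℝ) * (ENNReal.ofReal B * Y) ^ (1/2:ℝ)) := by
        gcongr
    _ = ENNReal.ofReal (A * B) * X ^ (1/2:ℝ) * Y ^ (1/2:ℝ) := by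
        rw [ENNReal.mul_rpow_of_nonneg _ _ (by norm_num : (0:ℝ) ≤ 1/2),
          ENNReal.mul_rpow_of_nonneg _ _ (by norm_num : (0:ℝ) ≤ 1/2),
          ENNReal.ofReal_mul hA.le]
        calc ENNReal.ofReal A * ((ENNReal.ofReal B) ^ (1/2:ℝ) * X ^ (1/2:ℝ) *
              ((ENNReal.ofReal B) ^ (1/2:ℝ) * Y ^ (1/2:ℝ)))
            = ENNReal.ofReal A * ((ENNReal.ofReal B) ^ (1/2:ℝ) * (ENNReal.ofReal B) ^ (1/2:ℝ))
              * X ^ (1/2:ℝ) * Y ^ (1/2:ℝ) := by ring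
          _ = ENNReal.ofReal A * ENNReal.ofReal B * X ^ (1/2:ℝ) * Y ^ (1/2:ℝ) := by rw [hBhalf]
end

section
/- Let μ be a Borel probability measure on a compact set E ⊂ ℝ², and suppose there is C > 0 such that for all triples t = (t₁₂, t₁₃, t₂₃) of positive reals and all ε ∈ (0,1], (μ×μ×μ){(x¹,x²,x³) : t_{ij} − ε ≤ |x^i − x^j| ≤ t_{ij} + ε for all i<j} ≤ C ε³. Then the image of E×E×E under the map (x¹,x²,x³) ↦ (|x¹−x²|, |x¹−x³|, |x²−x³|) ∈ ℝ³ has positive 3-dimensional Lebesgue measure. -/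
open MeasureTheory Real Metric ENNReal

theorem stmt_13 (E : Set (EuclideanSpace ℝ (Fin 2))) (hE : IsCompact E)
    (μ : Measure (EuclideanSpace ℝ (Fin 2))) [IsProbabilityMeasure μ]
    (hsupp : μ Eᶜ = 0)
    (C : ℝ) (hC : 0 < C)
    (hbound : ∀ t₁₂ t₁₃ t₂₃ : ℝ, 0 < t₁₂ → 0 < t₁₃ → 0 < t₂₃ →
      ∀ ε : ℝ, ε ∈ Set.Ioc (0 : ℝ) 1 →
        (μ.prod (μ.prod μ))
          {x : EuclideanSpace ℝ (Fin 2) × EuclideanSpace ℝ (Fin 2) × EuclideanSpace ℝ (Fin 2) |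
            t₁₂ - ε ≤ dist x.1 x.2.1 ∧ dist x.1 x.2.1 ≤ t₁₂ + ε ∧
            t₁₃ - ε ≤ dist x.1 x.2.2 ∧ dist x.1 x.2.2 ≤ t₁₃ + ε ∧
            t₂₃ - ε ≤ dist x.2.1 x.2.2 ∧ dist x.2.1 x.2.2 ≤ t₂₃ + ε}
          ≤ ENNReal.ofReal (C * ε ^ 3)) :
    0 < volume ((fun x : EuclideanSpace ℝ (Fin 2) × EuclideanSpace ℝ (Fin 2) ×
        EuclideanSpace ℝ (Fin 2) =>
          ((dist x.1 x.2.1, dist x.1 x.2.2, dist x.2.1 x.2.2) : ℝ × ℝ × ℝ))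
        '' (E ×ˢ (E ×ˢ E))) := by
  set f : EuclideanSpace ℝ (Fin 2) × EuclideanSpace ℝ (Fin 2) × EuclideanSpace ℝ (Fin 2)
      → ℝ × ℝ × ℝ :=
    fun x => (dist x.1 x.2.1, dist x.1 x.2.2, dist x.2.1 x.2.2) with hfdef
  have hf : Continuous f := by
    apply Continuous.prodMk
    · exact (continuous_fst.dist (continuous_fst.comp continuous_snd))
    apply Continuous.prodMk
    · exact (continuous_fst.dist (continuous_snd.comp continuous_snd))
    · exact ((continuous_fst.comp continuous_snd).dist (continuous_snd.comp continuous_snd))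
  set ρ : Measure (ℝ × ℝ × ℝ) := Measure.map f (μ.prod (μ.prod μ)) with hρdef
  haveI : IsProbabilityMeasure ρ := Measure.isProbabilityMeasure_map hf.measurable.aemeasurable
  set K := f '' (E ×ˢ (E ×ˢ E)) with hKdef
  have hKc : IsCompact K := ((hE.prod (hE.prod hE)).image hf)
  -- volume of closed balls in ℝ × ℝ × ℝ
  have hvol : ∀ (x : ℝ × ℝ × ℝ) (r : ℝ),
      volume (closedBall x r) = ENNReal.ofReal (2 * r) ^ 3 := by
    rintro ⟨a, b, c⟩ r
    rw [← closedBall_prod_same, ← closedBall_prod_same, Measure.volume_eq_prod,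
      Measure.prod_prod, Measure.volume_eq_prod, Measure.prod_prod, Real.volume_closedBall,
      Real.volume_closedBall, Real.volume_closedBall]
    ring
  -- key ball estimate
  have hball : ∀ (x : ℝ × ℝ × ℝ) (r : ℝ), r ∈ Set.Ioc (0:ℝ) 1 →
      ρ (closedBall x r) ≤ (C.toNNReal • (volume : Measure (ℝ × ℝ × ℝ))) (closedBall x r) := by
    rintro ⟨a, b, c⟩ r hr
    have hr0 : 0 < r := hr.1
    have h1 : ρ (closedBall (a, b, c) r) = (μ.prod (μ.prod μ)) (f ⁻¹' closedBall (a, b, c) r) :=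
      Measure.map_apply hf.measurable measurableSet_closedBall
    have h2 : f ⁻¹' closedBall (a, b, c) r ⊆
        {x : EuclideanSpace ℝ (Fin 2) × EuclideanSpace ℝ (Fin 2) × EuclideanSpace ℝ (Fin 2) |
          max a r - r ≤ dist x.1 x.2.1 ∧ dist x.1 x.2.1 ≤ max a r + r ∧
          max b r - r ≤ dist x.1 x.2.2 ∧ dist x.1 x.2.2 ≤ max b r + r ∧
          max c r - r ≤ dist x.2.1 x.2.2 ∧ dist x.2.1 x.2.2 ≤ max c r + r} := by
      intro y hy
      simp only [Set.mem_preimage, mem_closedBall, Prod.dist_eq, max_le_iff, Real.dist_eq,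
        hfdef] at hy
      obtain ⟨h12, h13, h23⟩ := hy
      rw [abs_le] at h12 h13 h23
      have d12 : (0:ℝ) ≤ dist y.1 y.2.1 := dist_nonneg
      have d13 : (0:ℝ) ≤ dist y.1 y.2.2 := dist_nonneg
      have d23 : (0:ℝ) ≤ dist y.2.1 y.2.2 := dist_nonneg
      constructor
      · rcases max_cases a r with ⟨h, _⟩ | ⟨h, _⟩ <;> rw [h] <;> linarith [h12.2]
      refine ⟨by linarith [h12.1, le_max_left a r], ?_, ?_, ?_, ?_⟩
      · rcases max_cases b r with ⟨h, _⟩ | ⟨h, _⟩ <;> rw [h] <;> linarith [h13.2]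
      · linarith [h13.1, le_max_left b r]
      · rcases max_cases c r with ⟨h, _⟩ | ⟨h, _⟩ <;> rw [h] <;> linarith [h23.2]
      · linarith [h23.1, le_max_left c r]
    have h3 := hbound (max a r) (max b r) (max c r)
      (lt_max_of_lt_right hr0) (lt_max_of_lt_right hr0) (lt_max_of_lt_right hr0) r hr
    have h4 : ρ (closedBall (a, b, c) r) ≤ ENNReal.ofReal (C * r ^ 3) := by
      rw [h1]; exact le_trans (measure_mono h2) h3
    refine h4.trans ?_
    rw [Measure.smul_apply, hvol, ENNReal.smul_def, smul_eq_mul,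
      show ((C.toNNReal : ℝ≥0∞)) = ENNReal.ofReal C from rfl, ENNReal.ofReal_mul hC.le]
    gcongr
    rw [← ENNReal.ofReal_pow (by positivity)]
    apply ENNReal.ofReal_le_ofReal
    nlinarith [pow_pos hr0 3, hr0.le]
  -- compare ρ with C • volume on K via Besicovitch
  have hcomp : ρ K ≤ ENNReal.ofReal C * volume K := by
    have h := (Besicovitch.vitaliFamily ρ).measure_le_of_frequently_le
      (C.toNNReal • (volume : Measure (ℝ × ℝ × ℝ))) Measure.AbsolutelyContinuous.rfl K
      (fun x _ => by
        apply (Besicovitch.tendsto_filterAt ρ x).frequently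
        apply Filter.Eventually.frequently
        filter_upwards [Ioc_mem_nhdsGT_of_mem ⟨le_refl (0:ℝ), zero_lt_one⟩] with r hr
        exact hball x r hr)
    rw [Measure.smul_apply, ENNReal.smul_def, smul_eq_mul,
      show ((C.toNNReal : ℝ≥0∞)) = ENNReal.ofReal C from rfl] at h
    exact h
  -- ρ K ≥ 1
  have hμE : μ E = 1 := by
    rwa [prob_compl_eq_zero_iff hE.measurableSet] at hsupp
  have hEEE : (μ.prod (μ.prod μ)) (E ×ˢ (E ×ˢ E)) = 1 := by
    rw [Measure.prod_prod, Measure.prod_prod, hμE]; simp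
  have hρK : (1 : ENNReal) ≤ ρ K := by
    rw [hρdef, Measure.map_apply hf.measurable hKc.measurableSet]
    rw [← hEEE]
    exact measure_mono (Set.subset_preimage_image f _)
  -- conclude
  rw [pos_iff_ne_zero]
  intro h0
  rw [h0, mul_zero] at hcomp
  exact absurd (hρK.trans hcomp) (by simp)
end

section
/- Let P ⊂ [0,1]² be a set of n points, s ∈ (0,2), and define μ_P^s as the measure with density n^{−1} n^{2/s} Σ_{p∈P} 𝟙_{B(p, n^{−1/s})}. Then the energy integral I_s(μ_P^s) = ∬ |x−y|^{−s} dμ_P^s(x) dμ_P^s(y) is finite (with a bound independent of n) if and only if n^{−2} Σ_{p ≠ p' ∈ P} |p − p'|^{−s} ≲ 1, provided the points of P are n^{−1/s}-separated. -/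
open MeasureTheory Real Classical Metric Set
open scoped ENNReal NNReal

noncomputable section

local notation "E2" => EuclideanSpace ℝ (Fin 2)

lemma vol_ball2 (x : E2) (R : ℝ) (hR : 0 ≤ R) :
    volume (Metric.ball x R) = ENNReal.ofReal (π * R ^ 2) := by
  rw [EuclideanSpace.volume_ball]
  simp only [Fintype.card_fin]
  rw [show ((2:ℕ):ℝ)/2 + 1 = 2 by norm_num, Real.Gamma_two]
  rw [sq_sqrt pi_nonneg]
  rw [ENNReal.ofReal_mul pi_nonneg, ← ENNReal.ofReal_pow hR]
  rw [div_one, mul_comm]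

lemma vol_closedBall2 (x : E2) (R : ℝ) (hR : 0 ≤ R) :
    volume (Metric.closedBall x R) = ENNReal.ofReal (π * R ^ 2) := by
  rw [EuclideanSpace.volume_closedBall]
  simp only [Fintype.card_fin]
  rw [show ((2:ℕ):ℝ)/2 + 1 = 2 by norm_num, Real.Gamma_two]
  rw [sq_sqrt pi_nonneg]
  rw [ENNReal.ofReal_mul pi_nonneg, ← ENNReal.ofReal_pow hR]
  rw [div_one, mul_comm]

lemma ball_kernel_bound {s : ℝ} (hs : 0 < s) (hs2 : s < 2) (x : E2) (R : ℝ) (hR : 0 < R) :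
    ∫⁻ y in Metric.ball x R, ENNReal.ofReal (dist x y ^ (-s))
      ≤ ENNReal.ofReal (π * (2 / (2 - s)) * R ^ (2 - s)) := by
  have hs' : s ≠ 0 := hs.ne'
  have h2s : (0:ℝ) < 2 - s := by linarith
  have hmeas : AEMeasurable (fun y : E2 => dist x y ^ (-s))
      (volume.restrict (Metric.ball x R)) := by fun_prop
  rw [lintegral_eq_lintegral_meas_le _
    (Filter.Eventually.of_forall fun y => rpow_nonneg dist_nonneg _) hmeas]
  set T : ℝ := R ^ (-s) with hTdef
  have hT : 0 < T := rpow_pos_of_pos hR _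
  set M : ℝ → ℝ≥0∞ := fun t =>
    (volume.restrict (Metric.ball x R)) {a : E2 | t ≤ dist x a ^ (-s)} with hM
  have hbd1 : ∀ t : ℝ, M t ≤ ENNReal.ofReal (π * R ^ 2) := by
    intro t
    rw [hM, ← vol_ball2 x R hR.le]
    simp only
    rw [Measure.restrict_apply' measurableSet_ball]
    exact measure_mono inter_subset_right
  have hbd2 : ∀ t : ℝ, T < t → M t ≤ ENNReal.ofReal (π * t ^ (-(2/s))) := by
    intro t ht
    have ht0 : 0 < t := hT.trans ht
    have hsub : {a : E2 | t ≤ dist x a ^ (-s)} ⊆ Metric.closedBall x (t ^ (-(1/s))) := by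
      intro a ha
      simp only [mem_setOf_eq] at ha
      have hd0 : 0 < dist x a := by
        rcases eq_or_lt_of_le (dist_nonneg (x := x) (y := a)) with h | h
        · exfalso
          rw [← h, Real.zero_rpow (neg_ne_zero.mpr hs')] at ha
          linarith
        · exact h
      have := Real.rpow_le_rpow_of_nonpos ht0 ha
        (neg_nonpos.mpr (by positivity : (0:ℝ) ≤ 1/s))
      rw [← Real.rpow_mul hd0.le] at this
      rw [show (-s) * (-(1/s)) = 1 by field_simp, Real.rpow_one] at this
      simpa [Metric.mem_closedBall, dist_comm] using this
    have hMt : M t ≤ volume (Metric.closedBall x (t ^ (-(1/s)))) := by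
      rw [hM]
      simp only
      rw [Measure.restrict_apply' measurableSet_ball]
      exact measure_mono ((inter_subset_left).trans hsub)
    refine hMt.trans_eq ?_
    rw [vol_closedBall2 _ _ (rpow_nonneg ht0.le _)]
    congr 2
    rw [← Real.rpow_natCast (t ^ (-(1/s))) 2, ← Real.rpow_mul ht0.le]
    rw [show (-(1/s)) * ((2:ℕ):ℝ) = -(2/s) by push_cast; ring]
  calc ∫⁻ t in Set.Ioi (0:ℝ), M t
      = ∫⁻ t in Set.Ioc 0 T ∪ Set.Ioi T, M t := by
        rw [Set.Ioc_union_Ioi_eq_Ioi hT.le]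
    _ ≤ (∫⁻ t in Set.Ioc 0 T, M t) + ∫⁻ t in Set.Ioi T, M t := lintegral_union_le _ _ _
    _ ≤ ENNReal.ofReal (π * R ^ (2 - s)) + ENNReal.ofReal (π * (s/(2-s)) * R ^ (2-s)) := by
        gcongr
        · calc ∫⁻ t in Set.Ioc 0 T, M t
              ≤ ∫⁻ _ in Set.Ioc 0 T, ENNReal.ofReal (π * R ^ 2) :=
                lintegral_mono fun t => hbd1 t
            _ = ENNReal.ofReal (π * R ^ 2) * ENNReal.ofReal (T - 0) := by
                rw [setLIntegral_const, Real.volume_Ioc]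
            _ = ENNReal.ofReal (π * R ^ (2-s)) := by
                rw [← ENNReal.ofReal_mul (by positivity)]
                congr 1
                rw [sub_zero, hTdef, mul_assoc]
                congr 1
                rw [← Real.rpow_natCast R 2, ← Real.rpow_add hR,
                  show ((2:ℕ):ℝ) + -s = 2 - s by push_cast; ring]
        · calc ∫⁻ t in Set.Ioi T, M t
              ≤ ∫⁻ t in Set.Ioi T, ENNReal.ofReal (π * t ^ (-(2/s))) := by
                refine setLIntegral_mono' measurableSet_Ioi fun t ht => hbd2 t ht
            _ = ENNReal.ofReal (∫ t in Set.Ioi T, π * t ^ (-(2/s))) := by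
                rw [← ofReal_integral_eq_lintegral_ofReal]
                · exact (integrableOn_Ioi_rpow_of_lt (by
                    rw [neg_lt_neg_iff, lt_div_iff₀ hs]
                    linarith) hT).const_mul π
                · filter_upwards [ae_restrict_mem measurableSet_Ioi] with t ht
                  have : (0:ℝ) < t := hT.trans ht
                  positivity
            _ = ENNReal.ofReal (π * (s/(2-s)) * R ^ (2-s)) := by
                congr 1
                rw [integral_const_mul, integral_Ioi_rpow_of_lt (by
                    rw [neg_lt_neg_iff, lt_div_iff₀ hs]; linarith) hT]
                rw [hTdef, ← Real.rpow_mul hR.le]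
                rw [show (-s) * (-(2/s) + 1) = 2 - s by field_simp; ring]
                have hden : -(2/s) + 1 ≠ 0 := by
                  have h1 : 1 < 2/s := (one_lt_div hs).2 hs2
                  linarith
                have hne : (-2:ℝ) + s ≠ 0 := fun h => h2s.ne' (by linarith)
                field_simp [hne]
                ring
    _ ≤ ENNReal.ofReal (π * (2 / (2 - s)) * R ^ (2 - s)) := by
        rw [← ENNReal.ofReal_add (by positivity) (by positivity)]
        apply ENNReal.ofReal_le_ofReal
        have h1 : π * R ^ (2-s) + π * (s/(2-s)) * R ^ (2-s)
            = π * (1 + s/(2-s)) * R ^ (2-s) := by ring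
        rw [h1, show 1 + s/(2-s) = 2/(2-s) by field_simp; ring]

lemma density_step (P : Finset E2) (c rad : ℝ) (hc : 0 ≤ c) (G : E2 → ℝ≥0∞) (hG : Measurable G) :
    (∫⁻ z, (ENNReal.ofReal (c * ∑ p ∈ P,
        Set.indicator (Metric.ball p rad) (fun _ => (1:ℝ)) z)) * G z)
      = ∑ p ∈ P, ENNReal.ofReal c * ∫⁻ z in Metric.ball p rad, G z := by
  have h1 : ∀ z, (ENNReal.ofReal (c * ∑ p ∈ P,
      Set.indicator (Metric.ball p rad) (fun _ => (1:ℝ)) z)) * G z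
      = ∑ p ∈ P, Set.indicator (Metric.ball p rad)
          (fun w => ENNReal.ofReal c * G w) z := by
    intro z
    have h2 : c * ∑ p ∈ P, Set.indicator (Metric.ball p rad) (fun _ => (1:ℝ)) z
        = ∑ p ∈ P, (if z ∈ Metric.ball p rad then c else 0) := by
      rw [Finset.mul_sum]
      refine Finset.sum_congr rfl fun p _ => ?_
      by_cases h : z ∈ Metric.ball p rad <;> simp [Set.indicator_apply, h]
    rw [h2, ENNReal.ofReal_sum_of_nonneg (fun p _ => by positivity), Finset.sum_mul]
    refine Finset.sum_congr rfl fun p _ => ?_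
    by_cases h : z ∈ Metric.ball p rad <;> simp [Set.indicator_apply, h]
  calc (∫⁻ z, (ENNReal.ofReal (c * ∑ p ∈ P,
        Set.indicator (Metric.ball p rad) (fun _ => (1:ℝ)) z)) * G z)
      = ∫⁻ z, ∑ p ∈ P, Set.indicator (Metric.ball p rad)
          (fun w => ENNReal.ofReal c * G w) z := by
        exact lintegral_congr h1
    _ = ∑ p ∈ P, ∫⁻ z, Set.indicator (Metric.ball p rad)
          (fun w => ENNReal.ofReal c * G w) z :=
        lintegral_finset_sum _ (fun p _ =>
          (hG.const_mul _).indicator measurableSet_ball)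
    _ = ∑ p ∈ P, ENNReal.ofReal c * ∫⁻ z in Metric.ball p rad, G z := by
        refine Finset.sum_congr rfl fun p _ => ?_
        rw [lintegral_indicator measurableSet_ball, lintegral_const_mul _ hG]

lemma expand (P : Finset E2) (c rad : ℝ) (hc : 0 ≤ c)
    (K : E2 → E2 → ℝ≥0∞) (hK : Measurable (Function.uncurry K)) :
    (∫⁻ x, ∫⁻ y, K x y
      ∂(volume.withDensity (fun z => ENNReal.ofReal (c * ∑ p ∈ P,
          Set.indicator (Metric.ball p rad) (fun _ => (1:ℝ)) z)))
      ∂(volume.withDensity (fun z => ENNReal.ofReal (c * ∑ p ∈ P,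
          Set.indicator (Metric.ball p rad) (fun _ => (1:ℝ)) z))))
    = ∑ p ∈ P, ∑ q ∈ P, ENNReal.ofReal c * (ENNReal.ofReal c *
        ∫⁻ x in Metric.ball p rad, ∫⁻ y in Metric.ball q rad, K x y) := by
  set f : E2 → ℝ≥0∞ := fun z => ENNReal.ofReal (c * ∑ p ∈ P,
      Set.indicator (Metric.ball p rad) (fun _ => (1:ℝ)) z) with hfdef
  have hf : Measurable f := by
    apply Measurable.ennreal_ofReal
    apply Measurable.const_mul
    apply Finset.measurable_sum
    intro p _
    exact measurable_const.indicator measurableSet_ball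
  have hKx : ∀ x, Measurable (K x) := fun x => hK.comp measurable_prodMk_left
  have hTq : ∀ q : E2, Measurable fun x => ∫⁻ y in Metric.ball q rad, K x y := by
    intro q
    exact Measurable.lintegral_prod_right' (f := Function.uncurry K) hK
  have hin : ∀ x, (∫⁻ y, K x y ∂(volume.withDensity f))
      = ∑ q ∈ P, ENNReal.ofReal c * ∫⁻ y in Metric.ball q rad, K x y := by
    intro x
    rw [lintegral_withDensity_eq_lintegral_mul _ hf (hKx x)]
    exact density_step P c rad hc (K x) (hKx x)
  calc (∫⁻ x, ∫⁻ y, K x y ∂(volume.withDensity f) ∂(volume.withDensity f))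
      = ∫⁻ x, (∑ q ∈ P, ENNReal.ofReal c * ∫⁻ y in Metric.ball q rad, K x y)
          ∂(volume.withDensity f) := lintegral_congr hin
    _ = ∫⁻ x, f x * (∑ q ∈ P, ENNReal.ofReal c *
          ∫⁻ y in Metric.ball q rad, K x y) := by
        rw [lintegral_withDensity_eq_lintegral_mul _ hf
          (Finset.measurable_sum _ fun q _ => (hTq q).const_mul _)]
        rfl
    _ = ∑ p ∈ P, ENNReal.ofReal c * ∫⁻ x in Metric.ball p rad,
          (∑ q ∈ P, ENNReal.ofReal c * ∫⁻ y in Metric.ball q rad, K x y) :=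
        density_step P c rad hc _
          (Finset.measurable_sum _ fun q _ => (hTq q).const_mul _)
    _ = ∑ p ∈ P, ∑ q ∈ P, ENNReal.ofReal c * (ENNReal.ofReal c *
          ∫⁻ x in Metric.ball p rad, ∫⁻ y in Metric.ball q rad, K x y) := by
        refine Finset.sum_congr rfl fun p _ => ?_
        rw [lintegral_finset_sum _ (fun q _ => (hTq q).const_mul _), Finset.mul_sum]
        refine Finset.sum_congr rfl fun q _ => ?_
        rw [lintegral_const_mul _ (hTq q)]

set_option maxHeartbeats 2000000 in
theorem stmt_15 (s : ℝ) (hs : 0 < s) (hs2 : s < 2) :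
    ∃ A : ℝ, 0 < A ∧
      ∀ (n : ℕ), 1 ≤ n → ∀ P : Finset (EuclideanSpace ℝ (Fin 2)),
        P.card = n →
        (↑P ⊆ {x : EuclideanSpace ℝ (Fin 2) | ∀ i, x i ∈ Set.Icc (0 : ℝ) 1}) →
        (∀ p ∈ P, ∀ q ∈ P, p ≠ q → (n : ℝ) ^ (-(1 / s)) ≤ dist p q) →
        (∫⁻ x, ∫⁻ y, ENNReal.ofReal (dist x y ^ (-s))
            ∂(volume.withDensity (fun z => ENNReal.ofReal ((n : ℝ)⁻¹ * (n : ℝ) ^ (2 / s) *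
              ∑ p ∈ P, Set.indicator (Metric.ball p ((n : ℝ) ^ (-(1 / s)))) (fun _ => (1 : ℝ)) z)))
            ∂(volume.withDensity (fun z => ENNReal.ofReal ((n : ℝ)⁻¹ * (n : ℝ) ^ (2 / s) *
              ∑ p ∈ P, Set.indicator (Metric.ball p ((n : ℝ) ^ (-(1 / s)))) (fun _ => (1 : ℝ)) z))))
          ≤ ENNReal.ofReal (A * (1 + (n : ℝ) ^ (-(2 : ℝ)) *
              ∑ p ∈ P, ∑ q ∈ P.erase p, dist p q ^ (-s))) ∧
        ENNReal.ofReal ((n : ℝ) ^ (-(2 : ℝ)) * ∑ p ∈ P, ∑ q ∈ P.erase p, dist p q ^ (-s))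
          ≤ ENNReal.ofReal A * (1 +
              ∫⁻ x, ∫⁻ y, ENNReal.ofReal (dist x y ^ (-s))
                ∂(volume.withDensity (fun z => ENNReal.ofReal ((n : ℝ)⁻¹ * (n : ℝ) ^ (2 / s) *
                  ∑ p ∈ P, Set.indicator (Metric.ball p ((n : ℝ) ^ (-(1 / s)))) (fun _ => (1 : ℝ)) z)))
                ∂(volume.withDensity (fun z => ENNReal.ofReal ((n : ℝ)⁻¹ * (n : ℝ) ^ (2 / s) *
                  ∑ p ∈ P, Set.indicator (Metric.ball p ((n : ℝ) ^ (-(1 / s)))) (fun _ => (1 : ℝ)) z)))) := by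
  have hs' : s ≠ 0 := hs.ne'
  have h2s : (0:ℝ) < 2 - s := by linarith
  set C : ℝ := π * (2 / (2 - s)) with hCdef
  have hC : 0 < C := by
    have := pi_pos
    positivity
  set A0 : ℝ := π * C * 6 ^ (2 - s) with hA0def
  have hA0 : 0 < A0 := by
    have := pi_pos
    positivity
  set A' : ℝ := A0 * 4 ^ s + π ^ 2 * 2 ^ s with hA'def
  have hA' : 0 < A' := by
    have := pi_pos
    positivity
  set A : ℝ := A0 + A' + 3 ^ s / π ^ 2 + 1 with hAdef
  have hA : 0 < A := by
    have := pi_pos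
    positivity
  refine ⟨A, hA, ?_⟩
  intro n hn P hcard _hbox hsep
  clear_value C A0 A' A
  -- basic quantities
  set N : ℝ := (n : ℝ) with hNdef
  have hN1 : (1:ℝ) ≤ N := by rw [hNdef]; exact_mod_cast hn
  have hN0 : (0:ℝ) < N := by linarith
  set r : ℝ := N ^ (-(1/s)) with hrdef
  have hr0 : (0:ℝ) < r := rpow_pos_of_pos hN0 _
  set c : ℝ := N⁻¹ * N ^ (2/s) with hcdef
  have hc0 : (0:ℝ) < c := by positivity
  -- scalar identities
  have hrr : ∀ t : ℝ, r ^ t = N ^ ((-(1/s)) * t) := fun t => by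
    rw [hrdef, ← Real.rpow_mul hN0.le]
  have hr2 : r ^ (2:ℕ) = N ^ (-(2/s)) := by
    rw [← Real.rpow_natCast r 2, hrr, show (-(1/s)) * ((2:ℕ):ℝ) = -(2/s) by push_cast; ring]
  have hcr : c = N ^ (2/s - 1) := by
    rw [hcdef, ← Real.rpow_neg_one N, ← Real.rpow_add hN0]
    congr 1
    ring
  have h1 : c * c * (r ^ (2:ℕ) * r ^ (2 - s)) = N⁻¹ := by
    rw [hcr, hr2, hrr, ← Real.rpow_add hN0, ← Real.rpow_add hN0, ← Real.rpow_add hN0,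
      ← Real.rpow_neg_one N]
    congr 1
    field_simp
    ring
  have h2 : c * c * (r ^ (2:ℕ) * r ^ (2:ℕ)) = N⁻¹ * N⁻¹ := by
    have e1 : c * c * (r ^ (2:ℕ) * r ^ (2:ℕ))
        = N ^ ((2/s - 1) + (2/s - 1) + (-(2/s) + -(2/s))) := by
      rw [Real.rpow_add hN0, Real.rpow_add hN0, Real.rpow_add hN0, ← hcr, ← hr2]
    rw [e1, show (2/s - 1) + (2/s - 1) + (-(2/s) + -(2/s)) = (-1) + (-1) by ring,
      Real.rpow_add hN0, Real.rpow_neg_one]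
  have h3 : r ^ (-s) = N := by
    rw [hrr, show (-(1/s)) * (-s) = 1 by field_simp, Real.rpow_one]
  have hN2 : N ^ (-(2:ℝ)) = N⁻¹ * N⁻¹ := by
    rw [show (-(2:ℝ)) = (-1) + (-1) by norm_num, Real.rpow_add hN0, Real.rpow_neg_one]
  have hK : Measurable (Function.uncurry
      (fun x y : E2 => ENNReal.ofReal (dist x y ^ (-s)))) := by
    show Measurable fun p : E2 × E2 => ENNReal.ofReal (dist p.1 p.2 ^ (-s))
    fun_prop
  have hI : (∫⁻ x, ∫⁻ y, ENNReal.ofReal (dist x y ^ (-s))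
        ∂(volume.withDensity (fun z => ENNReal.ofReal (c * ∑ p ∈ P,
            Set.indicator (Metric.ball p r) (fun _ => (1 : ℝ)) z)))
        ∂(volume.withDensity (fun z => ENNReal.ofReal (c * ∑ p ∈ P,
            Set.indicator (Metric.ball p r) (fun _ => (1 : ℝ)) z))))
      = ∑ p ∈ P, ∑ q ∈ P, ENNReal.ofReal c * (ENNReal.ofReal c *
          ∫⁻ x in Metric.ball p r, ∫⁻ y in Metric.ball q r,
            ENNReal.ofReal (dist x y ^ (-s))) :=
    expand P c r hc0.le _ hK
  -- ball-integral bounds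
  have hball_near : ∀ p q : E2, dist p q ≤ 4*r →
      (∫⁻ x in Metric.ball p r, ∫⁻ y in Metric.ball q r, ENNReal.ofReal (dist x y ^ (-s)))
        ≤ ENNReal.ofReal (C * (6*r) ^ (2-s) * (π * r ^ 2)) := by
    intro p q hpq
    calc (∫⁻ x in Metric.ball p r, ∫⁻ y in Metric.ball q r, ENNReal.ofReal (dist x y ^ (-s)))
        ≤ ∫⁻ _x in Metric.ball p r, ENNReal.ofReal (C * (6*r) ^ (2-s)) := by
          refine setLIntegral_mono' measurableSet_ball fun x hx => ?_
          have hsub : Metric.ball q r ⊆ Metric.ball x (6*r) := by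
            intro y hy
            rw [Metric.mem_ball] at hy hx ⊢
            have h4 := dist_triangle4 y q p x
            rw [dist_comm q p, dist_comm p x] at h4
            linarith
          exact le_trans (lintegral_mono_set hsub)
            (by rw [hCdef]; exact ball_kernel_bound hs hs2 x (6*r) (by positivity))
      _ = ENNReal.ofReal (C * (6*r) ^ (2-s)) * volume (Metric.ball p r) := by
          rw [setLIntegral_const]
      _ = ENNReal.ofReal (C * (6*r) ^ (2-s) * (π * r ^ 2)) := by
          rw [vol_ball2 p r hr0.le, ← ENNReal.ofReal_mul (by positivity)]
  have hball_far : ∀ p q : E2, 4*r ≤ dist p q →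
      (∫⁻ x in Metric.ball p r, ∫⁻ y in Metric.ball q r, ENNReal.ofReal (dist x y ^ (-s)))
        ≤ ENNReal.ofReal ((dist p q / 2) ^ (-s) * (π * r ^ 2) * (π * r ^ 2)) := by
    intro p q hpq
    have hd0 : (0:ℝ) < dist p q := lt_of_lt_of_le (by positivity) hpq
    calc (∫⁻ x in Metric.ball p r, ∫⁻ y in Metric.ball q r, ENNReal.ofReal (dist x y ^ (-s)))
        ≤ ∫⁻ _x in Metric.ball p r,
            ENNReal.ofReal ((dist p q / 2) ^ (-s) * (π * r ^ 2)) := by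
          refine setLIntegral_mono' measurableSet_ball fun x hx => ?_
          calc (∫⁻ y in Metric.ball q r, ENNReal.ofReal (dist x y ^ (-s)))
              ≤ ∫⁻ _y in Metric.ball q r, ENNReal.ofReal ((dist p q / 2) ^ (-s)) := by
                refine setLIntegral_mono' measurableSet_ball fun y hy => ?_
                rw [Metric.mem_ball] at hx hy
                have h4 := dist_triangle4 p x y q
                rw [dist_comm p x] at h4
                have hxy : dist p q / 2 ≤ dist x y := by linarith
                exact ENNReal.ofReal_le_ofReal
                  (Real.rpow_le_rpow_of_nonpos (by positivity) hxy
                    (neg_nonpos.mpr hs.le))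
            _ = ENNReal.ofReal ((dist p q / 2) ^ (-s)) * volume (Metric.ball q r) := by
                rw [setLIntegral_const]
            _ = ENNReal.ofReal ((dist p q / 2) ^ (-s) * (π * r ^ 2)) := by
                rw [vol_ball2 q r hr0.le, ← ENNReal.ofReal_mul (by positivity)]
      _ = ENNReal.ofReal ((dist p q / 2) ^ (-s) * (π * r ^ 2)) *
            volume (Metric.ball p r) := by rw [setLIntegral_const]
      _ = ENNReal.ofReal ((dist p q / 2) ^ (-s) * (π * r ^ 2) * (π * r ^ 2)) := by
          rw [vol_ball2 p r hr0.le, ← ENNReal.ofReal_mul (by positivity)]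
  have hball_low : ∀ p q : E2, r ≤ dist p q →
      ENNReal.ofReal ((3 * dist p q) ^ (-s) * (π * r ^ 2) * (π * r ^ 2))
        ≤ ∫⁻ x in Metric.ball p r, ∫⁻ y in Metric.ball q r, ENNReal.ofReal (dist x y ^ (-s)) := by
    intro p q hpq
    have hd0 : (0:ℝ) < dist p q := lt_of_lt_of_le hr0 hpq
    have inner : ∀ x ∈ Metric.ball p r,
        ENNReal.ofReal ((3 * dist p q) ^ (-s) * (π * r ^ 2))
          ≤ ∫⁻ y in Metric.ball q r, ENNReal.ofReal (dist x y ^ (-s)) := by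
      intro x hx
      have hae : ∀ᵐ y ∂(volume.restrict (Metric.ball q r)),
          ENNReal.ofReal ((3 * dist p q) ^ (-s)) ≤ ENNReal.ofReal (dist x y ^ (-s)) := by
        refine (ae_restrict_iff' measurableSet_ball).2 ?_
        have hx0 : volume ({x} : Set E2) = 0 := measure_singleton x
        have hxne : ∀ᵐ (y : E2), y ≠ x := by
          rw [ae_iff]
          convert hx0 using 2
          ext y
          simp
        filter_upwards [hxne] with y hyx hyq
        rw [Metric.mem_ball] at hx hyq
        have hxy0 : (0:ℝ) < dist x y := dist_pos.mpr (Ne.symm hyx)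
        have hxy3 : dist x y ≤ 3 * dist p q := by
          have h4 := dist_triangle4 x p q y
          rw [dist_comm q y] at h4
          linarith
        exact ENNReal.ofReal_le_ofReal
          (Real.rpow_le_rpow_of_nonpos hxy0 hxy3 (neg_nonpos.mpr hs.le))
      calc ENNReal.ofReal ((3 * dist p q) ^ (-s) * (π * r ^ 2))
          = ∫⁻ _y in Metric.ball q r, ENNReal.ofReal ((3 * dist p q) ^ (-s)) := by
            rw [setLIntegral_const, vol_ball2 q r hr0.le,
              ← ENNReal.ofReal_mul (by positivity)]
        _ ≤ ∫⁻ y in Metric.ball q r, ENNReal.ofReal (dist x y ^ (-s)) := lintegral_mono_ae hae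
    calc ENNReal.ofReal ((3 * dist p q) ^ (-s) * (π * r ^ 2) * (π * r ^ 2))
        = ∫⁻ _x in Metric.ball p r,
            ENNReal.ofReal ((3 * dist p q) ^ (-s) * (π * r ^ 2)) := by
          rw [setLIntegral_const, vol_ball2 p r hr0.le,
            ← ENNReal.ofReal_mul (by positivity)]
      _ ≤ ∫⁻ x in Metric.ball p r, ∫⁻ y in Metric.ball q r, ENNReal.ofReal (dist x y ^ (-s)) :=
          setLIntegral_mono' measurableSet_ball inner
  -- key scalar equality for near/diagonal pairs
  have e2 : c * (c * (C * (6*r) ^ (2-s) * (π * r ^ 2))) = A0 * N⁻¹ := by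
    rw [Real.mul_rpow (by norm_num : (0:ℝ) ≤ 6) hr0.le, hA0def]
    linear_combination (π * C * (6:ℝ) ^ (2-s)) * h1
  -- per-pair bounds
  have hdiag' : ∀ p q : E2, dist p q ≤ 4*r →
      ENNReal.ofReal c * (ENNReal.ofReal c *
        ∫⁻ x in Metric.ball p r, ∫⁻ y in Metric.ball q r, ENNReal.ofReal (dist x y ^ (-s)))
        ≤ ENNReal.ofReal (A0 * N⁻¹) := by
    intro p q hd
    calc ENNReal.ofReal c * (ENNReal.ofReal c *
          ∫⁻ x in Metric.ball p r, ∫⁻ y in Metric.ball q r, ENNReal.ofReal (dist x y ^ (-s)))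
        ≤ ENNReal.ofReal c * (ENNReal.ofReal c *
            ENNReal.ofReal (C * (6*r) ^ (2-s) * (π * r ^ 2))) := by
          gcongr
          exact hball_near p q hd
      _ = ENNReal.ofReal (c * (c * (C * (6*r) ^ (2-s) * (π * r ^ 2)))) := by
          rw [← ENNReal.ofReal_mul hc0.le, ← ENNReal.ofReal_mul hc0.le]
      _ = ENNReal.ofReal (A0 * N⁻¹) := by rw [e2]
  have hdiag : ∀ p : E2,
      ENNReal.ofReal c * (ENNReal.ofReal c *
        ∫⁻ x in Metric.ball p r, ∫⁻ y in Metric.ball p r, ENNReal.ofReal (dist x y ^ (-s)))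
        ≤ ENNReal.ofReal (A0 * N⁻¹) := fun p =>
    hdiag' p p (by rw [dist_self]; positivity)
  have hpair : ∀ p ∈ P, ∀ q ∈ P.erase p,
      ENNReal.ofReal c * (ENNReal.ofReal c *
        ∫⁻ x in Metric.ball p r, ∫⁻ y in Metric.ball q r, ENNReal.ofReal (dist x y ^ (-s)))
        ≤ ENNReal.ofReal (A' * (N⁻¹ * N⁻¹) * dist p q ^ (-s)) := by
    intro p hp q hq
    obtain ⟨hqp, hqP⟩ := Finset.mem_erase.mp hq
    have hsep' : r ≤ dist p q := hsep p hp q hqP (Ne.symm hqp)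
    have hd0 : (0:ℝ) < dist p q := lt_of_lt_of_le hr0 hsep'
    have hds0 : (0:ℝ) ≤ dist p q ^ (-s) := rpow_nonneg hd0.le _
    by_cases hcase : dist p q ≤ 4*r
    · -- near case
      have e3 : (4*r) ^ (-s) ≤ dist p q ^ (-s) :=
        Real.rpow_le_rpow_of_nonpos (by positivity) hcase (neg_nonpos.mpr hs.le)
      have hNN : N⁻¹ * N = 1 := inv_mul_cancel₀ hN0.ne'
      have h44 : (4:ℝ) ^ s * 4 ^ (-s) = 1 := by
        rw [← Real.rpow_add (by norm_num : (0:ℝ) < 4), add_neg_cancel, Real.rpow_zero]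
      have e4 : A0 * 4 ^ s * (N⁻¹ * N⁻¹) * (4*r) ^ (-s) = A0 * N⁻¹ := by
        rw [Real.mul_rpow (by norm_num : (0:ℝ) ≤ 4) hr0.le, h3]
        linear_combination (A0 * N⁻¹ * (N⁻¹ * N)) * h44 + (A0 * N⁻¹) * hNN
      calc ENNReal.ofReal c * (ENNReal.ofReal c *
            ∫⁻ x in Metric.ball p r, ∫⁻ y in Metric.ball q r, ENNReal.ofReal (dist x y ^ (-s)))
          ≤ ENNReal.ofReal (A0 * N⁻¹) := hdiag' p q hcase
        _ = ENNReal.ofReal (A0 * 4 ^ s * (N⁻¹ * N⁻¹) * (4*r) ^ (-s)) := by rw [e4]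
        _ ≤ ENNReal.ofReal (A' * (N⁻¹ * N⁻¹) * dist p q ^ (-s)) := by
            apply ENNReal.ofReal_le_ofReal
            have hA'ge : A0 * 4 ^ s ≤ A' := by
              rw [hA'def]
              have : (0:ℝ) ≤ π ^ 2 * 2 ^ s := by positivity
              linarith
            calc A0 * 4 ^ s * (N⁻¹ * N⁻¹) * (4*r) ^ (-s)
                ≤ A0 * 4 ^ s * (N⁻¹ * N⁻¹) * dist p q ^ (-s) := by gcongr
              _ ≤ A' * (N⁻¹ * N⁻¹) * dist p q ^ (-s) := by gcongr
    · -- far case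
      push_neg at hcase
      have hfar : 4*r ≤ dist p q := hcase.le
      have hdh : (dist p q / 2) ^ (-s) = 2 ^ s * dist p q ^ (-s) := by
        rw [Real.div_rpow hd0.le (by norm_num : (0:ℝ) ≤ 2),
          Real.rpow_neg (by norm_num : (0:ℝ) ≤ 2), div_eq_mul_inv, inv_inv, mul_comm]
      calc ENNReal.ofReal c * (ENNReal.ofReal c *
            ∫⁻ x in Metric.ball p r, ∫⁻ y in Metric.ball q r, ENNReal.ofReal (dist x y ^ (-s)))
          ≤ ENNReal.ofReal c * (ENNReal.ofReal c *
              ENNReal.ofReal ((dist p q / 2) ^ (-s) * (π * r ^ 2) * (π * r ^ 2))) := by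
            gcongr
            exact hball_far p q hfar
        _ = ENNReal.ofReal (c * (c *
              ((dist p q / 2) ^ (-s) * (π * r ^ 2) * (π * r ^ 2)))) := by
            rw [← ENNReal.ofReal_mul hc0.le, ← ENNReal.ofReal_mul hc0.le]
        _ ≤ ENNReal.ofReal (A' * (N⁻¹ * N⁻¹) * dist p q ^ (-s)) := by
            apply ENNReal.ofReal_le_ofReal
            have e5 : c * (c * ((dist p q / 2) ^ (-s) * (π * r ^ 2) * (π * r ^ 2)))
                = π ^ 2 * 2 ^ s * (N⁻¹ * N⁻¹) * dist p q ^ (-s) := by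
              rw [hdh]
              linear_combination (π ^ 2 * 2 ^ s * dist p q ^ (-s)) * h2
            rw [e5]
            have hA'ge : π ^ 2 * 2 ^ s ≤ A' := by
              rw [hA'def]
              have : (0:ℝ) ≤ A0 * 4 ^ s := by positivity
              linarith
            gcongr
  -- lower per-pair bound
  have hpair_low : ∀ p ∈ P, ∀ q ∈ P.erase p,
      ENNReal.ofReal ((3:ℝ) ^ (-s) * π ^ 2 * (N⁻¹ * N⁻¹) * dist p q ^ (-s))
        ≤ ENNReal.ofReal c * (ENNReal.ofReal c *
            ∫⁻ x in Metric.ball p r, ∫⁻ y in Metric.ball q r,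
              ENNReal.ofReal (dist x y ^ (-s))) := by
    intro p hp q hq
    obtain ⟨hqp, hqP⟩ := Finset.mem_erase.mp hq
    have hsep' : r ≤ dist p q := hsep p hp q hqP (Ne.symm hqp)
    have hd0 : (0:ℝ) < dist p q := lt_of_lt_of_le hr0 hsep'
    calc ENNReal.ofReal ((3:ℝ) ^ (-s) * π ^ 2 * (N⁻¹ * N⁻¹) * dist p q ^ (-s))
        = ENNReal.ofReal (c * (c *
            ((3 * dist p q) ^ (-s) * (π * r ^ 2) * (π * r ^ 2)))) := by
          congr 1
          rw [Real.mul_rpow (by norm_num : (0:ℝ) ≤ 3) hd0.le]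
          linear_combination (-((3:ℝ) ^ (-s) * π ^ 2 * dist p q ^ (-s))) * h2
      _ = ENNReal.ofReal c * (ENNReal.ofReal c *
            ENNReal.ofReal ((3 * dist p q) ^ (-s) * (π * r ^ 2) * (π * r ^ 2))) := by
          rw [← ENNReal.ofReal_mul hc0.le, ← ENNReal.ofReal_mul hc0.le]
      _ ≤ ENNReal.ofReal c * (ENNReal.ofReal c *
            ∫⁻ x in Metric.ball p r, ∫⁻ y in Metric.ball q r,
              ENNReal.ofReal (dist x y ^ (-s))) := by
          gcongr
          exact hball_low p q hsep'
  have hD0 : (0:ℝ) ≤ ∑ p ∈ P, ∑ q ∈ P.erase p, dist p q ^ (-s) :=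
    Finset.sum_nonneg fun p _ => Finset.sum_nonneg fun q _ =>
      rpow_nonneg dist_nonneg _
  have hxD : (0:ℝ) ≤ N⁻¹ * N⁻¹ * ∑ p ∈ P, ∑ q ∈ P.erase p, dist p q ^ (-s) := by
    have : (0:ℝ) ≤ N⁻¹ * N⁻¹ := by positivity
    exact mul_nonneg this hD0
  constructor
  · -- upper bound
    rw [hI]
    have hsum1 : ∑ _p ∈ P, ENNReal.ofReal (A0 * N⁻¹) = ENNReal.ofReal A0 := by
      rw [Finset.sum_const, hcard, nsmul_eq_mul]
      rw [show ((n:ℕ):ℝ≥0∞) = ENNReal.ofReal N from by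
        rw [hNdef]; exact (ENNReal.ofReal_natCast n).symm]
      rw [← ENNReal.ofReal_mul hN0.le]
      congr 1
      field_simp
    have hsum2 : ∑ p ∈ P, ∑ q ∈ P.erase p,
        ENNReal.ofReal (A' * (N⁻¹ * N⁻¹) * dist p q ^ (-s))
        = ENNReal.ofReal (A' * (N⁻¹ * N⁻¹) *
            ∑ p ∈ P, ∑ q ∈ P.erase p, dist p q ^ (-s)) := by
      calc ∑ p ∈ P, ∑ q ∈ P.erase p,
          ENNReal.ofReal (A' * (N⁻¹ * N⁻¹) * dist p q ^ (-s))
          = ∑ p ∈ P, ENNReal.ofReal (∑ q ∈ P.erase p,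
              A' * (N⁻¹ * N⁻¹) * dist p q ^ (-s)) := by
            refine Finset.sum_congr rfl fun p _ => ?_
            exact (ENNReal.ofReal_sum_of_nonneg fun q _ =>
              mul_nonneg (by positivity) (rpow_nonneg dist_nonneg _)).symm
        _ = ENNReal.ofReal (∑ p ∈ P, ∑ q ∈ P.erase p,
              A' * (N⁻¹ * N⁻¹) * dist p q ^ (-s)) :=
            (ENNReal.ofReal_sum_of_nonneg fun p _ => Finset.sum_nonneg fun q _ =>
              mul_nonneg (by positivity) (rpow_nonneg dist_nonneg _)).symm
        _ = ENNReal.ofReal (A' * (N⁻¹ * N⁻¹) *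
              ∑ p ∈ P, ∑ q ∈ P.erase p, dist p q ^ (-s)) := by
            congr 1
            rw [Finset.mul_sum]
            exact Finset.sum_congr rfl fun p _ => (Finset.mul_sum _ _ _).symm
    calc ∑ p ∈ P, ∑ q ∈ P, ENNReal.ofReal c * (ENNReal.ofReal c *
          ∫⁻ x in Metric.ball p r, ∫⁻ y in Metric.ball q r,
            ENNReal.ofReal (dist x y ^ (-s)))
        ≤ ∑ p ∈ P, (ENNReal.ofReal (A0 * N⁻¹) + ∑ q ∈ P.erase p,
            ENNReal.ofReal (A' * (N⁻¹ * N⁻¹) * dist p q ^ (-s))) := by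
          refine Finset.sum_le_sum fun p hp => ?_
          rw [← Finset.add_sum_erase P _ hp]
          exact add_le_add (hdiag p) (Finset.sum_le_sum fun q hq => hpair p hp q hq)
      _ = ∑ _p ∈ P, ENNReal.ofReal (A0 * N⁻¹) + ∑ p ∈ P, ∑ q ∈ P.erase p,
            ENNReal.ofReal (A' * (N⁻¹ * N⁻¹) * dist p q ^ (-s)) :=
          Finset.sum_add_distrib
      _ = ENNReal.ofReal A0 + ENNReal.ofReal (A' * (N⁻¹ * N⁻¹) *
            ∑ p ∈ P, ∑ q ∈ P.erase p, dist p q ^ (-s)) := by rw [hsum1, hsum2]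
      _ ≤ ENNReal.ofReal (A * (1 + N ^ (-(2:ℝ)) *
            ∑ p ∈ P, ∑ q ∈ P.erase p, dist p q ^ (-s))) := by
          rw [← ENNReal.ofReal_add hA0.le (by
            exact mul_nonneg (mul_nonneg hA'.le (by positivity)) hD0)]
          apply ENNReal.ofReal_le_ofReal
          rw [hN2]
          have hAgeA0 : A0 ≤ A := by
            rw [hAdef]
            have : (0:ℝ) ≤ 3 ^ s / π ^ 2 := by positivity
            linarith
          have hAgeA' : A' ≤ A := by
            rw [hAdef]
            have : (0:ℝ) ≤ 3 ^ s / π ^ 2 := by positivity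
            linarith
          have h5 : A' * (N⁻¹ * N⁻¹) * (∑ p ∈ P, ∑ q ∈ P.erase p, dist p q ^ (-s))
              ≤ A * (N⁻¹ * N⁻¹ * ∑ p ∈ P, ∑ q ∈ P.erase p, dist p q ^ (-s)) := by
            rw [mul_assoc]
            exact mul_le_mul_of_nonneg_right hAgeA' hxD
          have h6 : A * (1 + N⁻¹ * N⁻¹ * ∑ p ∈ P, ∑ q ∈ P.erase p, dist p q ^ (-s))
              = A + A * (N⁻¹ * N⁻¹ * ∑ p ∈ P, ∑ q ∈ P.erase p, dist p q ^ (-s)) := by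
            ring
          linarith [h5, h6, hAgeA0]
  · -- lower bound
    have hpull : ∑ p ∈ P, ∑ q ∈ P.erase p,
        ENNReal.ofReal ((3:ℝ) ^ (-s) * π ^ 2 * (N⁻¹ * N⁻¹) * dist p q ^ (-s))
        = ENNReal.ofReal ((3:ℝ) ^ (-s) * π ^ 2 * (N⁻¹ * N⁻¹) *
            ∑ p ∈ P, ∑ q ∈ P.erase p, dist p q ^ (-s)) := by
      calc ∑ p ∈ P, ∑ q ∈ P.erase p,
          ENNReal.ofReal ((3:ℝ) ^ (-s) * π ^ 2 * (N⁻¹ * N⁻¹) * dist p q ^ (-s))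
          = ∑ p ∈ P, ENNReal.ofReal (∑ q ∈ P.erase p,
              (3:ℝ) ^ (-s) * π ^ 2 * (N⁻¹ * N⁻¹) * dist p q ^ (-s)) := by
            refine Finset.sum_congr rfl fun p _ => ?_
            exact (ENNReal.ofReal_sum_of_nonneg fun q _ =>
              mul_nonneg (by positivity) (rpow_nonneg dist_nonneg _)).symm
        _ = ENNReal.ofReal (∑ p ∈ P, ∑ q ∈ P.erase p,
              (3:ℝ) ^ (-s) * π ^ 2 * (N⁻¹ * N⁻¹) * dist p q ^ (-s)) :=
            (ENNReal.ofReal_sum_of_nonneg fun p _ => Finset.sum_nonneg fun q _ =>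
              mul_nonneg (by positivity) (rpow_nonneg dist_nonneg _)).symm
        _ = ENNReal.ofReal ((3:ℝ) ^ (-s) * π ^ 2 * (N⁻¹ * N⁻¹) *
              ∑ p ∈ P, ∑ q ∈ P.erase p, dist p q ^ (-s)) := by
            congr 1
            rw [Finset.mul_sum]
            exact Finset.sum_congr rfl fun p _ => (Finset.mul_sum _ _ _).symm
    have h33 : (3:ℝ) ^ s * 3 ^ (-s) = 1 := by
      rw [← Real.rpow_add (by norm_num : (0:ℝ) < 3), add_neg_cancel, Real.rpow_zero]
    have hkey : (1:ℝ) ≤ A * ((3:ℝ) ^ (-s) * π ^ 2) := by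
      have hAge : 3 ^ s / π ^ 2 ≤ A := by
        rw [hAdef]
        linarith [hA0, hA']
      calc (1:ℝ) = 3 ^ s / π ^ 2 * ((3:ℝ) ^ (-s) * π ^ 2) := by
            rw [show (3:ℝ) ^ s / π ^ 2 * ((3:ℝ) ^ (-s) * π ^ 2)
                = 3 ^ s * 3 ^ (-s) from by
              field_simp]
            rw [h33]
        _ ≤ A * ((3:ℝ) ^ (-s) * π ^ 2) :=
            mul_le_mul_of_nonneg_right hAge (by positivity)
    calc ENNReal.ofReal (N ^ (-(2:ℝ)) * ∑ p ∈ P, ∑ q ∈ P.erase p, dist p q ^ (-s))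
        ≤ ENNReal.ofReal (A * ((3:ℝ) ^ (-s) * π ^ 2 * (N⁻¹ * N⁻¹) *
            ∑ p ∈ P, ∑ q ∈ P.erase p, dist p q ^ (-s))) := by
          apply ENNReal.ofReal_le_ofReal
          rw [hN2]
          nlinarith [hxD, mul_le_mul_of_nonneg_right hkey hxD]
      _ = ENNReal.ofReal A * ENNReal.ofReal ((3:ℝ) ^ (-s) * π ^ 2 * (N⁻¹ * N⁻¹) *
            ∑ p ∈ P, ∑ q ∈ P.erase p, dist p q ^ (-s)) :=
          ENNReal.ofReal_mul hA.le
      _ ≤ ENNReal.ofReal A * (1 +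
            ∫⁻ x, ∫⁻ y, ENNReal.ofReal (dist x y ^ (-s))
              ∂(volume.withDensity (fun z => ENNReal.ofReal (c * ∑ p ∈ P,
                  Set.indicator (Metric.ball p r) (fun _ => (1 : ℝ)) z)))
              ∂(volume.withDensity (fun z => ENNReal.ofReal (c * ∑ p ∈ P,
                  Set.indicator (Metric.ball p r) (fun _ => (1 : ℝ)) z)))) := by
          gcongr
          refine le_trans ?_ le_add_self
          rw [hI, ← hpull]
          calc ∑ p ∈ P, ∑ q ∈ P.erase p,
              ENNReal.ofReal ((3:ℝ) ^ (-s) * π ^ 2 * (N⁻¹ * N⁻¹) * dist p q ^ (-s))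
              ≤ ∑ p ∈ P, ∑ q ∈ P.erase p, ENNReal.ofReal c * (ENNReal.ofReal c *
                  ∫⁻ x in Metric.ball p r, ∫⁻ y in Metric.ball q r,
                    ENNReal.ofReal (dist x y ^ (-s))) :=
                Finset.sum_le_sum fun p hp => Finset.sum_le_sum fun q hq =>
                  hpair_low p hp q hq
            _ ≤ ∑ p ∈ P, ∑ q ∈ P, ENNReal.ofReal c * (ENNReal.ofReal c *
                  ∫⁻ x in Metric.ball p r, ∫⁻ y in Metric.ball q r,
                    ENNReal.ofReal (dist x y ^ (-s))) :=
                Finset.sum_le_sum fun p hp =>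
                  Finset.sum_le_sum_of_subset (Finset.erase_subset _ _)


end
end

section
/- Let P ⊂ [0,1]² with #P = n, let s > 7/4, and suppose the measure μ_P^s (density n^{−1} n^{2/s} Σ_{p∈P} 𝟙_{B(p, n^{−1/s})}) satisfies (μ_P^s × μ_P^s × μ_P^s){(x¹,x²,x³) : t_{ij} ≤ |x^i−x^j| ≤ t_{ij}+ε for all i<j} ≤ C ε³ for all t and all ε ∈ (0,1]. Then for every triple t, the number of triples (p¹,p²,p³) ∈ P³ with t_{ij} − n^{−1/s} ≤ |p^i − p^j| ≤ t_{ij} + n^{−1/s} for all i<j is at most C' n^{3 − 3/s}. -/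
open MeasureTheory Real Classical Metric
open scoped ENNReal

lemma my_withDensity_prod {α β : Type*} [MeasurableSpace α] [MeasurableSpace β]
    (μ : Measure α) (ν : Measure β) [SigmaFinite μ] [SigmaFinite ν]
    {f : α → ℝ≥0∞} {g : β → ℝ≥0∞} (hf : Measurable f) (hg : Measurable g)
    [SigmaFinite (μ.withDensity f)] [SigmaFinite (ν.withDensity g)] :
    (μ.withDensity f).prod (ν.withDensity g)
      = (μ.prod ν).withDensity (fun x => f x.1 * g x.2) := by
  refine Measure.prod_eq fun s t hs ht => ?_
  rw [withDensity_apply _ (hs.prod ht), ← Measure.prod_restrict,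
    lintegral_prod_mul hf.aemeasurable hg.aemeasurable,
    withDensity_apply _ hs, withDensity_apply _ ht]

lemma cover6 {r d t : ℝ} (hr : 0 < r) (h1 : t - 3*r ≤ d) (h2 : d ≤ t + 3*r) :
    ∃ k : Fin 6, t - 3*r + (k:ℝ)*r ≤ d ∧ d ≤ (t - 3*r + (k:ℝ)*r) + r := by
  set u : ℝ := (d - (t - 3*r)) / r with hu
  have hu0 : 0 ≤ u := div_nonneg (by linarith) hr.le
  have hu6 : u ≤ 6 := by
    rw [hu, div_le_iff₀ hr]; linarith
  refine ⟨⟨min 5 ⌊u⌋₊, by omega⟩, ?_, ?_⟩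
  · have hk : ((min 5 ⌊u⌋₊ : ℕ) : ℝ) ≤ u := by
      rcases le_or_gt (⌊u⌋₊) 5 with h | h
      · rw [min_eq_right h]; exact Nat.floor_le hu0
      · rw [min_eq_left h.le]
        calc ((5:ℕ):ℝ) ≤ (⌊u⌋₊:ℝ) := by exact_mod_cast h.le
        _ ≤ u := Nat.floor_le hu0
    rw [hu] at hk
    have := (le_div_iff₀ hr).mp hk
    simp only [Fin.val_mk]
    linarith
  · have hk : u ≤ ((min 5 ⌊u⌋₊ : ℕ) : ℝ) + 1 := by
      rcases le_or_gt (⌊u⌋₊) 5 with h | h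
      · rw [min_eq_right h]; exact (Nat.lt_floor_add_one u).le
      · rw [min_eq_left h.le]; push_cast; linarith
    rw [hu] at hk
    have := (div_le_iff₀ hr).mp hk
    simp only [Fin.val_mk]
    nlinarith

theorem stmt_17 (s C : ℝ) (hs : 7 / 4 < s) (hC : 0 < C) :
    ∃ C' : ℝ, 0 < C' ∧
    ∀ (n : ℕ), 1 ≤ n →
    ∀ P : Finset (EuclideanSpace ℝ (Fin 2)), P.card = n →
    (↑P ⊆ {x : EuclideanSpace ℝ (Fin 2) | ∀ i, x i ∈ Set.Icc (0 : ℝ) 1}) →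
    ∀ (μ : Measure (EuclideanSpace ℝ (Fin 2))),
      μ = volume.withDensity (fun z => ENNReal.ofReal ((n : ℝ)⁻¹ * (n : ℝ) ^ (2 / s) *
            ∑ p ∈ P, Set.indicator (Metric.ball p ((n : ℝ) ^ (-(1 / s)))) (fun _ => (1 : ℝ)) z)) →
    (∀ (t₁₂ t₁₃ t₂₃ : ℝ) (ε : ℝ), ε ∈ Set.Ioc (0 : ℝ) 1 →
      (μ.prod (μ.prod μ))
        {x : EuclideanSpace ℝ (Fin 2) × EuclideanSpace ℝ (Fin 2) × EuclideanSpace ℝ (Fin 2) |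
          (t₁₂ ≤ dist x.1 x.2.1 ∧ dist x.1 x.2.1 ≤ t₁₂ + ε) ∧
          (t₁₃ ≤ dist x.1 x.2.2 ∧ dist x.1 x.2.2 ≤ t₁₃ + ε) ∧
          (t₂₃ ≤ dist x.2.1 x.2.2 ∧ dist x.2.1 x.2.2 ≤ t₂₃ + ε)}
        ≤ ENNReal.ofReal (C * ε ^ 3)) →
    ∀ t₁₂ t₁₃ t₂₃ : ℝ,
      (((P ×ˢ (P ×ˢ P)).filter (fun q =>
          (t₁₂ - (n : ℝ) ^ (-(1 / s)) ≤ dist q.1 q.2.1 ∧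
            dist q.1 q.2.1 ≤ t₁₂ + (n : ℝ) ^ (-(1 / s))) ∧
          (t₁₃ - (n : ℝ) ^ (-(1 / s)) ≤ dist q.1 q.2.2 ∧
            dist q.1 q.2.2 ≤ t₁₃ + (n : ℝ) ^ (-(1 / s))) ∧
          (t₂₃ - (n : ℝ) ^ (-(1 / s)) ≤ dist q.2.1 q.2.2 ∧
            dist q.2.1 q.2.2 ≤ t₂₃ + (n : ℝ) ^ (-(1 / s))))).card : ℝ)
        ≤ C' * (n : ℝ) ^ (3 - 3 / s) := by
  have hv0 : volume (Metric.ball (0 : EuclideanSpace ℝ (Fin 2)) 1) ≠ 0 :=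
    (measure_ball_pos volume _ one_pos).ne'
  have hvt : volume (Metric.ball (0 : EuclideanSpace ℝ (Fin 2)) 1) ≠ ⊤ :=
    measure_ball_lt_top.ne
  set v : ℝ := (volume (Metric.ball (0 : EuclideanSpace ℝ (Fin 2)) 1)).toReal with hvdef
  have hvpos : 0 < v := ENNReal.toReal_pos hv0 hvt
  refine ⟨216 * C / v ^ 3, by positivity, ?_⟩
  intro n hn P hPcard _hPsub μ hμ hbound t₁₂ t₁₃ t₂₃
  have hs0 : 0 < s := by linarith
  set N : ℝ := (n : ℝ) with hNdef
  have hN1 : (1:ℝ) ≤ N := by rw [hNdef]; exact_mod_cast hn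
  have hN0 : (0:ℝ) < N := by linarith
  set r : ℝ := N ^ (-(1/s)) with hrdef
  have hr0 : 0 < r := Real.rpow_pos_of_pos hN0 _
  have hr1 : r ≤ 1 :=
    Real.rpow_le_one_of_one_le_of_nonpos hN1 (neg_nonpos.mpr (by positivity))
  set f : EuclideanSpace ℝ (Fin 2) → ℝ≥0∞ := fun z => ENNReal.ofReal (N⁻¹ * N ^ (2 / s) *
      ∑ p ∈ P, Set.indicator (Metric.ball p r) (fun _ => (1 : ℝ)) z) with hfdef
  have hfm : Measurable f := by
    rw [hfdef]
    apply Measurable.ennreal_ofReal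
    apply Measurable.const_mul
    exact Finset.measurable_sum _ fun p _ =>
      (measurable_const.indicator measurableSet_ball)
  haveI hsf1 : SigmaFinite (volume.withDensity f) :=
    SigmaFinite.withDensity_of_ne_top' (fun z => by rw [hfdef]; exact ENNReal.ofReal_ne_top)
  haveI hsf2 : SigmaFinite ((volume.prod volume).withDensity (fun y => f y.1 * f y.2)) :=
    SigmaFinite.withDensity_of_ne_top' (fun y => by
      rw [hfdef]; exact ENNReal.mul_ne_top ENNReal.ofReal_ne_top ENNReal.ofReal_ne_top)
  have hprodm : μ.prod (μ.prod μ)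
      = (volume.prod (volume.prod volume)).withDensity
          (fun x => f x.1 * (f x.2.1 * f x.2.2)) := by
    have h2 : μ.prod μ = (volume.prod volume).withDensity (fun y => f y.1 * f y.2) := by
      rw [hμ]; exact my_withDensity_prod _ _ hfm hfm
    have hgm : Measurable (fun y : EuclideanSpace ℝ (Fin 2) × EuclideanSpace ℝ (Fin 2) =>
        f y.1 * f y.2) := (hfm.comp measurable_fst).mul (hfm.comp measurable_snd)
    rw [hμ] at h2 ⊢
    rw [h2]
    exact my_withDensity_prod _ _ hfm hgm
  -- the big slab set
  set S : Set (EuclideanSpace ℝ (Fin 2) × EuclideanSpace ℝ (Fin 2) × EuclideanSpace ℝ (Fin 2)) :=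
    {x | (t₁₂ - 3*r ≤ dist x.1 x.2.1 ∧ dist x.1 x.2.1 ≤ t₁₂ + 3*r) ∧
         (t₁₃ - 3*r ≤ dist x.1 x.2.2 ∧ dist x.1 x.2.2 ≤ t₁₃ + 3*r) ∧
         (t₂₃ - 3*r ≤ dist x.2.1 x.2.2 ∧ dist x.2.1 x.2.2 ≤ t₂₃ + 3*r)} with hSdef
  have hd12 : Measurable (fun x : EuclideanSpace ℝ (Fin 2) × EuclideanSpace ℝ (Fin 2) ×
      EuclideanSpace ℝ (Fin 2) => dist x.1 x.2.1) :=
    measurable_fst.dist (measurable_fst.comp measurable_snd)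
  have hd13 : Measurable (fun x : EuclideanSpace ℝ (Fin 2) × EuclideanSpace ℝ (Fin 2) ×
      EuclideanSpace ℝ (Fin 2) => dist x.1 x.2.2) :=
    measurable_fst.dist (measurable_snd.comp measurable_snd)
  have hd23 : Measurable (fun x : EuclideanSpace ℝ (Fin 2) × EuclideanSpace ℝ (Fin 2) ×
      EuclideanSpace ℝ (Fin 2) => dist x.2.1 x.2.2) :=
    (measurable_fst.comp measurable_snd).dist (measurable_snd.comp measurable_snd)
  have hSm : MeasurableSet S := by
    rw [hSdef]
    simp only [Set.setOf_and]
    exact (((measurableSet_le measurable_const hd12).inter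
        (measurableSet_le hd12 measurable_const)).inter
      (((measurableSet_le measurable_const hd13).inter
        (measurableSet_le hd13 measurable_const)).inter
      ((measurableSet_le measurable_const hd23).inter
        (measurableSet_le hd23 measurable_const))))
  -- upper bound on μ³ S
  have hupper : (μ.prod (μ.prod μ)) S ≤ ENNReal.ofReal (216 * (C * r^3)) := by
    have hScover : S ⊆ ⋃ k : Fin 6 × Fin 6 × Fin 6,
        {x : EuclideanSpace ℝ (Fin 2) × EuclideanSpace ℝ (Fin 2) × EuclideanSpace ℝ (Fin 2) |
          ((t₁₂ - 3*r + (k.1:ℝ)*r) ≤ dist x.1 x.2.1 ∧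
            dist x.1 x.2.1 ≤ (t₁₂ - 3*r + (k.1:ℝ)*r) + r) ∧
          ((t₁₃ - 3*r + (k.2.1:ℝ)*r) ≤ dist x.1 x.2.2 ∧
            dist x.1 x.2.2 ≤ (t₁₃ - 3*r + (k.2.1:ℝ)*r) + r) ∧
          ((t₂₃ - 3*r + (k.2.2:ℝ)*r) ≤ dist x.2.1 x.2.2 ∧
            dist x.2.1 x.2.2 ≤ (t₂₃ - 3*r + (k.2.2:ℝ)*r) + r)} := by
      rintro x ⟨⟨a, b⟩, ⟨c1, d1⟩, ⟨e1, g1⟩⟩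
      obtain ⟨k1, hk1, hk1'⟩ := cover6 hr0 a b
      obtain ⟨k2, hk2, hk2'⟩ := cover6 hr0 c1 d1
      obtain ⟨k3, hk3, hk3'⟩ := cover6 hr0 e1 g1
      exact Set.mem_iUnion.mpr ⟨(k1, k2, k3), ⟨⟨hk1, hk1'⟩, ⟨hk2, hk2'⟩, ⟨hk3, hk3'⟩⟩⟩
    calc (μ.prod (μ.prod μ)) S ≤ (μ.prod (μ.prod μ)) (⋃ k : Fin 6 × Fin 6 × Fin 6, _) :=
          measure_mono hScover
      _ ≤ ∑' k : Fin 6 × Fin 6 × Fin 6, (μ.prod (μ.prod μ)) _ := measure_iUnion_le _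
      _ ≤ ∑' _k : Fin 6 × Fin 6 × Fin 6, ENNReal.ofReal (C * r^3) :=
          ENNReal.tsum_le_tsum (fun k =>
            hbound (t₁₂ - 3*r + (k.1:ℝ)*r) (t₁₃ - 3*r + (k.2.1:ℝ)*r)
              (t₂₃ - 3*r + (k.2.2:ℝ)*r) r ⟨hr0, hr1⟩)
      _ = 216 * ENNReal.ofReal (C * r^3) := by
          rw [tsum_fintype, Finset.sum_const, Finset.card_univ]
          simp [nsmul_eq_mul]
      _ = ENNReal.ofReal (216 * (C * r^3)) := by
          rw [ENNReal.ofReal_mul (show (0:ℝ) ≤ 216 by norm_num), ENNReal.ofReal_ofNat]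
  -- notation for the lower bound
  set c : ℝ≥0∞ := ENNReal.ofReal (N⁻¹ * N ^ (2 / s)) with hcdef
  set Q : Finset (EuclideanSpace ℝ (Fin 2) × EuclideanSpace ℝ (Fin 2) ×
      EuclideanSpace ℝ (Fin 2)) :=
    (P ×ˢ (P ×ˢ P)).filter (fun q =>
          (t₁₂ - r ≤ dist q.1 q.2.1 ∧ dist q.1 q.2.1 ≤ t₁₂ + r) ∧
          (t₁₃ - r ≤ dist q.1 q.2.2 ∧ dist q.1 q.2.2 ≤ t₁₃ + r) ∧
          (t₂₃ - r ≤ dist q.2.1 q.2.2 ∧ dist q.2.1 q.2.2 ≤ t₂₃ + r)) with hQdef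
  set box : (EuclideanSpace ℝ (Fin 2) × EuclideanSpace ℝ (Fin 2) × EuclideanSpace ℝ (Fin 2)) →
      Set (EuclideanSpace ℝ (Fin 2) × EuclideanSpace ℝ (Fin 2) × EuclideanSpace ℝ (Fin 2)) :=
    fun q => Metric.ball q.1 r ×ˢ (Metric.ball q.2.1 r ×ˢ Metric.ball q.2.2 r) with hboxdef
  have hboxm : ∀ q, MeasurableSet (box q) := fun q =>
    measurableSet_ball.prod (measurableSet_ball.prod measurableSet_ball)
  have hfeq : ∀ z, f z = c * ∑ p ∈ P, (Metric.ball p r).indicator (fun _ => (1:ℝ≥0∞)) z := by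
    intro z
    rw [hfdef, hcdef]
    simp only
    rw [ENNReal.ofReal_mul (by positivity),
      ENNReal.ofReal_sum_of_nonneg (fun p _ => Set.indicator_nonneg (fun _ _ => zero_le_one) _)]
    congr 1
    refine Finset.sum_congr rfl fun p _ => ?_
    by_cases h : z ∈ Metric.ball p r <;> simp [Set.indicator_apply, h]
  have hpoint : ∀ x : EuclideanSpace ℝ (Fin 2) × EuclideanSpace ℝ (Fin 2) ×
      EuclideanSpace ℝ (Fin 2),
      f x.1 * (f x.2.1 * f x.2.2)
        = c^3 * ∑ q ∈ P ×ˢ (P ×ˢ P), (box q).indicator (fun _ => (1:ℝ≥0∞)) x := by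
    intro x
    have e1 : ∀ q : EuclideanSpace ℝ (Fin 2) × EuclideanSpace ℝ (Fin 2) ×
        EuclideanSpace ℝ (Fin 2),
        (box q).indicator (fun _ => (1:ℝ≥0∞)) x
          = (Metric.ball q.1 r).indicator (fun _ => (1:ℝ≥0∞)) x.1 *
            ((Metric.ball q.2.1 r).indicator (fun _ => (1:ℝ≥0∞)) x.2.1 *
             (Metric.ball q.2.2 r).indicator (fun _ => (1:ℝ≥0∞)) x.2.2) := by
      intro q
      rw [hboxdef]
      by_cases h1 : x.1 ∈ Metric.ball q.1 r <;>
        by_cases h2 : x.2.1 ∈ Metric.ball q.2.1 r <;>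
        by_cases h3 : x.2.2 ∈ Metric.ball q.2.2 r <;>
        simp [Set.indicator_apply, Set.mem_prod, h1, h2, h3]
    rw [hfeq x.1, hfeq x.2.1, hfeq x.2.2]
    simp only [e1, Finset.sum_product]
    rw [show ∀ A B C : ℝ≥0∞, (c * A) * ((c * B) * (c * C)) = c^3 * (A * (B * C))
      from fun A B C => by ring]
    congr 1
    rw [Finset.sum_mul_sum, Finset.sum_mul_sum]
    simp only [Finset.mul_sum]
  have hsub : ∀ q ∈ Q, box q ⊆ S := by
    intro q hq x hx
    rw [hQdef, Finset.mem_filter] at hq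
    obtain ⟨-, ⟨c12, c12'⟩, ⟨c13, c13'⟩, ⟨c23, c23'⟩⟩ := hq
    rw [hboxdef] at hx
    obtain ⟨b1, b2, b3⟩ := hx
    rw [Metric.mem_ball] at b1 b2 b3
    have T12 := dist_triangle4 x.1 q.1 q.2.1 x.2.1
    have T12' := dist_triangle4 q.1 x.1 x.2.1 q.2.1
    have T13 := dist_triangle4 x.1 q.1 q.2.2 x.2.2
    have T13' := dist_triangle4 q.1 x.1 x.2.2 q.2.2
    have T23 := dist_triangle4 x.2.1 q.2.1 q.2.2 x.2.2
    have T23' := dist_triangle4 q.2.1 x.2.1 x.2.2 q.2.2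
    have e1 : dist q.1 x.1 = dist x.1 q.1 := dist_comm _ _
    have e2 : dist q.2.1 x.2.1 = dist x.2.1 q.2.1 := dist_comm _ _
    have e3 : dist q.2.2 x.2.2 = dist x.2.2 q.2.2 := dist_comm _ _
    simp only [hSdef, Set.mem_setOf_eq]
    refine ⟨⟨by linarith, by linarith⟩, ⟨by linarith, by linarith⟩, by linarith, by linarith⟩
  set Vb : ℝ≥0∞ := ENNReal.ofReal (r^2) * volume (Metric.ball (0 : EuclideanSpace ℝ (Fin 2)) 1)
    with hVbdef
  have hvolbox : ∀ q, (volume.prod (volume.prod volume)) (box q) = Vb^3 := by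
    intro q
    rw [hboxdef]
    simp only
    rw [Measure.prod_prod, Measure.prod_prod,
      Measure.addHaar_ball volume _ hr0.le, Measure.addHaar_ball volume _ hr0.le,
      Measure.addHaar_ball volume _ hr0.le, finrank_euclideanSpace_fin, hVbdef]
    ring
  have hint : ∀ q ∈ Q,
      ∫⁻ x in S, (box q).indicator (fun _ => (1:ℝ≥0∞)) x ∂(volume.prod (volume.prod volume))
        = Vb^3 := by
    intro q hq
    rw [lintegral_indicator (hboxm q), setLIntegral_one, Measure.restrict_apply (hboxm q),
      Set.inter_eq_left.mpr (hsub q hq), hvolbox q]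
  have hlower : (Q.card : ℝ≥0∞) * (c^3 * Vb^3) ≤ (μ.prod (μ.prod μ)) S := by
    have msum : Measurable (fun x : EuclideanSpace ℝ (Fin 2) × EuclideanSpace ℝ (Fin 2) ×
        EuclideanSpace ℝ (Fin 2) =>
        ∑ q ∈ P ×ˢ (P ×ˢ P), (box q).indicator (fun _ => (1:ℝ≥0∞)) x) :=
      Finset.measurable_sum _ fun q _ => measurable_const.indicator (hboxm q)
    calc (Q.card : ℝ≥0∞) * (c^3 * Vb^3)
        = c^3 * ∑ _q ∈ Q, Vb^3 := by rw [Finset.sum_const, nsmul_eq_mul]; ring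
      _ = c^3 * ∑ q ∈ Q, ∫⁻ x in S, (box q).indicator (fun _ => (1:ℝ≥0∞)) x
            ∂(volume.prod (volume.prod volume)) := by
          congr 1
          exact (Finset.sum_congr rfl hint).symm
      _ ≤ c^3 * ∑ q ∈ P ×ˢ (P ×ˢ P), ∫⁻ x in S, (box q).indicator (fun _ => (1:ℝ≥0∞)) x
            ∂(volume.prod (volume.prod volume)) := by
          exact mul_le_mul_right (Finset.sum_le_sum_of_subset
            (show Q ⊆ P ×ˢ (P ×ˢ P) by rw [hQdef]; exact Finset.filter_subset _ _)) _
      _ = c^3 * ∫⁻ x in S, ∑ q ∈ P ×ˢ (P ×ˢ P), (box q).indicator (fun _ => (1:ℝ≥0∞)) x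
            ∂(volume.prod (volume.prod volume)) := by
          congr 1
          exact (lintegral_finset_sum _ fun q _ =>
            measurable_const.indicator (hboxm q)).symm
      _ = ∫⁻ x in S, c^3 * ∑ q ∈ P ×ˢ (P ×ˢ P), (box q).indicator (fun _ => (1:ℝ≥0∞)) x
            ∂(volume.prod (volume.prod volume)) :=
          (lintegral_const_mul _ msum).symm
      _ = ∫⁻ x in S, f x.1 * (f x.2.1 * f x.2.2)
            ∂(volume.prod (volume.prod volume)) := by
          exact lintegral_congr fun x => (hpoint x).symm
      _ = (μ.prod (μ.prod μ)) S := by rw [hprodm, withDensity_apply _ hSm]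
  have key : (Q.card : ℝ≥0∞) * (c^3 * Vb^3) ≤ ENNReal.ofReal (216 * (C * r^3)) :=
    hlower.trans hupper
  have hcv : c^3 * Vb^3 = ENNReal.ofReal ((N⁻¹ * N ^ (2/s))^3 * (r^2)^3) *
      (volume (Metric.ball (0 : EuclideanSpace ℝ (Fin 2)) 1))^3 := by
    rw [hcdef, hVbdef, mul_pow, ← ENNReal.ofReal_pow (by positivity),
      ← ENNReal.ofReal_pow (by positivity), ENNReal.ofReal_mul (by positivity)]
    ring
  have ha : (N⁻¹ * N ^ (2/s))^3 * (r^2)^3 = N ^ (-3:ℝ) := by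
    have h1 : N⁻¹ * N ^ (2/s) = N ^ (2/s - 1) := by
      rw [Real.rpow_sub hN0, Real.rpow_one]; ring
    have h2 : (N ^ (2/s - 1))^(3:ℕ) = N ^ ((2/s - 1)*3) := by
      rw [← Real.rpow_natCast (N ^ (2/s - 1)) 3, ← Real.rpow_mul hN0.le]
      norm_num
    have h3 : ((N ^ (-(1/s)))^(2:ℕ))^(3:ℕ) = N ^ (-(1/s)*6) := by
      rw [← Real.rpow_natCast (N ^ (-(1/s))) 2, ← Real.rpow_mul hN0.le,
        ← Real.rpow_natCast (N ^ (-(1/s) * ((2:ℕ):ℝ))) 3, ← Real.rpow_mul hN0.le]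
      norm_num
      ring_nf
    rw [h1, h2, hrdef, h3, ← Real.rpow_add hN0]
    rw [show ((2/s - 1)*3 + -(1/s)*6) = (-3:ℝ) from by ring]
  rw [hcv, ha] at key
  have key2 : (Q.card : ℝ) * (N ^ (-3:ℝ) * v^3) ≤ 216 * (C * r^3) := by
    have h := ENNReal.toReal_mono ENNReal.ofReal_ne_top key
    rw [ENNReal.toReal_mul, ENNReal.toReal_mul, ENNReal.toReal_pow,
      ENNReal.toReal_ofReal (by positivity : (0:ℝ) ≤ N ^ (-3:ℝ)),
      ENNReal.toReal_natCast,
      ENNReal.toReal_ofReal (by positivity : (0:ℝ) ≤ 216 * (C * r^3))] at h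
    rw [← hvdef] at h
    exact h
  have hNr : N ^ (-3:ℝ) * N ^ ((3:ℝ) - 3/s) = r^3 := by
    rw [hrdef, ← Real.rpow_natCast (N ^ (-(1/s))) 3, ← Real.rpow_mul hN0.le,
      ← Real.rpow_add hN0]
    congr 1
    push_cast
    ring
  have hdiv : ((Q.card : ℕ) : ℝ) ≤ (216 * (C * r^3)) / (N ^ (-3:ℝ) * v^3) :=
    (le_div_iff₀ (by positivity)).mpr key2
  have heq : (216 * (C * r^3)) / (N ^ (-3:ℝ) * v^3) = 216 * C / v^3 * N ^ ((3:ℝ) - 3/s) := by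
    rw [← hNr]
    have h1 : N ^ (-3:ℝ) ≠ 0 := (Real.rpow_pos_of_pos hN0 _).ne'
    field_simp
  rw [heq] at hdiv
  exact hdiv
end
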